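/- arXiv:1804.08885 — 2 statements merged into one kernel-verified Lean document; each statement's English description precedes it below -/
import Mathlib

section
/- Let t ≥ t' ≥ 0, let H be a t'-boundaried X-labeled graph, and let G be a t-boundaried X-labeled graph such that H is a boundaried labeled minor of forget(G, t'). Then there exists H' ∈ ext_{+(t−t')}(H) such that H' is a boundaried labeled minor of G. -/
namespace FDel

open scoped Classical

noncomputable section

/-- A boundaried `X`-labeled graph on the vertex universe `ℕ`: a (finite) vertex set,
a symmetric loopless adjacency relation, a labelset for each vertex, and a partial
assignment of boundary indices to vertices. -/
structure BLG (X : Type) where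
  verts : Set ℕ
  Adj : ℕ → ℕ → Prop
  label : ℕ → Set X
  bnd : ℕ → Option ℕ

variable {X : Type}

/-- Well-formedness of `G` as a `t`-boundaried `X`-labeled graph: the vertex set is finite,
adjacency is symmetric, loopless and supported on the vertex set, labels and boundary
indices live on vertices, the boundary assignment is injective, and indices lie in `{1,…,t}`. -/
def BLG.WF (t : ℕ) (G : BLG X) : Prop :=
  G.verts.Finite ∧
  (∀ u v, G.Adj u v → G.Adj v u) ∧
  (∀ v, ¬ G.Adj v v) ∧
  (∀ u v, G.Adj u v → u ∈ G.verts ∧ v ∈ G.verts) ∧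
  (∀ v, v ∉ G.verts → G.label v = ∅ ∧ G.bnd v = none) ∧
  (∀ u v i, G.bnd u = some i → G.bnd v = some i → u = v) ∧
  (∀ v i, G.bnd v = some i → v ∈ G.verts ∧ 1 ≤ i ∧ i ≤ t)

/-- Reachability inside the vertex set `S`. -/
def ReachIn (G : BLG X) (S : Set ℕ) (a b : ℕ) : Prop :=
  Relation.ReflTransGen (fun u v => G.Adj u v ∧ u ∈ S ∧ v ∈ S) a b

/-- `C` is (the vertex set of) a connected component of the subgraph of `G` induced by `S`. -/
def IsCompOf (G : BLG X) (S C : Set ℕ) : Prop :=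
  ∃ v ∈ S, C = {w | w ∈ S ∧ ReachIn G S v w}

/-- `G` is connected (and nonempty). -/
def BLG.Conn (G : BLG X) : Prop :=
  G.verts.Nonempty ∧ ∀ a ∈ G.verts, ∀ b ∈ G.verts, ReachIn G G.verts a b

/-- Isomorphism of boundaried labeled graphs: a bijection of the vertex sets preserving
adjacency, labelsets and boundary indices. -/
def Iso (G G' : BLG X) : Prop :=
  ∃ f : ℕ → ℕ, Set.BijOn f G.verts G'.verts ∧
    (∀ u ∈ G.verts, ∀ v ∈ G.verts, (G.Adj u v ↔ G'.Adj (f u) (f v))) ∧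
    (∀ v ∈ G.verts, G'.label (f v) = G.label v) ∧
    (∀ v ∈ G.verts, G'.bnd (f v) = G.bnd v)

/-- A boundaried labeled minor model of `H` in `G`. -/
structure MinorModel (H G : BLG X) (φ : ℕ → Set ℕ) : Prop where
  sub : ∀ v ∈ H.verts, φ v ⊆ G.verts
  nonempty : ∀ v ∈ H.verts, (φ v).Nonempty
  conn : ∀ v ∈ H.verts, ∀ a ∈ φ v, ∀ b ∈ φ v, ReachIn G (φ v) a b
  disj : ∀ u ∈ H.verts, ∀ v ∈ H.verts, u ≠ v → Disjoint (φ u) (φ v)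
  edge : ∀ u ∈ H.verts, ∀ v ∈ H.verts, H.Adj u v → ∃ a ∈ φ u, ∃ b ∈ φ v, G.Adj a b
  bnd_none : ∀ v ∈ H.verts, H.bnd v = none → ∀ a ∈ φ v, G.bnd a = none
  bnd_some : ∀ v ∈ H.verts, ∀ i, H.bnd v = some i →
    (∀ a ∈ φ v, G.bnd a = none ∨ G.bnd a = some i) ∧ ∃ a ∈ φ v, G.bnd a = some i
  labels : ∀ v ∈ H.verts, ∀ x, x ∈ H.label v → ∃ a ∈ φ v, x ∈ G.label a

/-- `H` is a boundaried labeled minor of `G`. -/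
def Minor (H G : BLG X) : Prop := ∃ φ, MinorModel H G φ

/-- Auxiliary injection for the right summand of `⊕`: a vertex of `G2` that is a boundary
vertex whose index also occurs in `G1` is identified with the corresponding vertex of `G1`. -/
def rmap (G1 G2 : BLG X) (v : ℕ) : ℕ :=
  if h : ∃ u, u ∈ G1.verts ∧ ∃ i, G2.bnd v = some i ∧ G1.bnd u = some i
  then 2 * Classical.choose h
  else 2 * v + 1

/-- The sum `G1 ⊕ G2`: disjoint union with boundary vertices of equal index identified. -/
def glue (G1 G2 : BLG X) : BLG X where
  verts := (fun v => 2 * v) '' G1.verts ∪ rmap G1 G2 '' G2.verts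
  Adj a b :=
    (∃ u ∈ G1.verts, ∃ v ∈ G1.verts, G1.Adj u v ∧ a = 2 * u ∧ b = 2 * v) ∨
    (∃ u ∈ G2.verts, ∃ v ∈ G2.verts, G2.Adj u v ∧ a = rmap G1 G2 u ∧ b = rmap G1 G2 v)
  label x := {l | (∃ v ∈ G1.verts, x = 2 * v ∧ l ∈ G1.label v) ∨
                  (∃ v ∈ G2.verts, x = rmap G1 G2 v ∧ l ∈ G2.label v)}
  bnd x :=
    if x ∈ (fun v => 2 * v) '' G1.verts ∪ rmap G1 G2 '' G2.verts then
      (if x % 2 = 0 then G1.bnd (x / 2) else G2.bnd (x / 2))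
    else none

/-- One-vertex piece on vertex `v`, with boundary index `i` and labelset `L`. -/
def singlePc (v i : ℕ) (L : Set X) : BLG X :=
  ⟨{v}, fun _ _ => False, fun x => if x = v then L else ∅,
   fun x => if x = v then some i else none⟩

/-- Two-vertex piece consisting of the single edge `{u,v}` with boundary indices `i`, `j`. -/
def edgePc (u v i j : ℕ) : BLG X :=
  ⟨{u, v}, fun a b => (a = u ∧ b = v) ∨ (a = v ∧ b = u), fun _ => ∅,
   fun x => if x = u then some i else if x = v then some j else none⟩

/-- The non-boundary vertices of `G`. -/
def interior (G : BLG X) : Set ℕ := {v | v ∈ G.verts ∧ G.bnd v = none}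

/-- The piece of `G` corresponding to a connected component `C` of `G − δ(G)`: `C` together
with its neighboring boundary vertices, with edges between boundary vertices removed and all
labels removed from boundary vertices. -/
def compPc (G : BLG X) (C : Set ℕ) : BLG X :=
  ⟨C ∪ {v | v ∈ G.verts ∧ G.bnd v ≠ none ∧ ∃ c ∈ C, G.Adj v c},
   fun a b => G.Adj a b ∧
     (a ∈ C ∪ {v | v ∈ G.verts ∧ G.bnd v ≠ none ∧ ∃ c ∈ C, G.Adj v c}) ∧
     (b ∈ C ∪ {v | v ∈ G.verts ∧ G.bnd v ≠ none ∧ ∃ c ∈ C, G.Adj v c}) ∧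
     ¬(G.bnd a ≠ none ∧ G.bnd b ≠ none),
   fun x => if x ∈ C then G.label x else ∅,
   fun x => if x ∈ C ∪ {v | v ∈ G.verts ∧ G.bnd v ≠ none ∧ ∃ c ∈ C, G.Adj v c}
            then G.bnd x else none⟩

/-- The set of pieces of `G`. -/
def pcs (G : BLG X) : Set (BLG X) :=
  {p | ∃ v ∈ G.verts, ∃ i, G.bnd v = some i ∧ p = singlePc v i (∅ : Set X)} ∪
  {p | ∃ v ∈ G.verts, ∃ i, G.bnd v = some i ∧ ∃ l ∈ G.label v, p = singlePc v i {l}} ∪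
  {p | ∃ u v i j, G.Adj u v ∧ G.bnd u = some i ∧ G.bnd v = some j ∧ p = edgePc u v i j} ∪
  {p | ∃ C, IsCompOf G (interior G) C ∧ p = compPc G C}

/-- The sum `⊕_{p ∈ P} p` of a set of pieces of a common graph; since pieces of a common
graph overlap exactly in boundary vertices (with equal indices), the sum is the union. -/
def unionOf (P : Set (BLG X)) : BLG X :=
  ⟨⋃ p ∈ P, p.verts,
   fun a b => ∃ p ∈ P, p.Adj a b,
   fun x => ⋃ p ∈ P, p.label x,
   fun x => if h : ∃ p, p ∈ P ∧ p.bnd x ≠ none then (Classical.choose h).bnd x else none⟩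

/-- `mpcs(G)`: all sums of nonempty subsets of the pieces of `G`, up to isomorphism. -/
def mpcs (G : BLG X) : Set (BLG X) :=
  {H | ∃ P ⊆ pcs G, P.Nonempty ∧ Iso H (unionOf P)}

/-- `mpcs` of a set of graphs. -/
def mpcsSet (S : Set (BLG X)) : Set (BLG X) := ⋃ G ∈ S, mpcs G

/-- Assign boundary index `i` to the vertex `v` of `G`. -/
def assignBnd (G : BLG X) (v i : ℕ) : BLG X :=
  ⟨G.verts, G.Adj, G.label, Function.update G.bnd v (some i)⟩

/-- Split the boundary vertex `u` of `G`: add a new vertex `w` with boundary index `i` and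
the edge `{u,w}`, reattach the edges `{u,b}` with `ME b` to `w`, and move the labels `l` of
`u` with `ML l` to `w`. -/
def splitVx (G : BLG X) (u w i : ℕ) (ME : ℕ → Prop) (ML : X → Prop) : BLG X :=
  ⟨insert w G.verts,
   fun a b =>
     (a = w ∧ b = u) ∨ (a = u ∧ b = w) ∨
     (a = w ∧ b ≠ w ∧ G.Adj u b ∧ ME b) ∨ (b = w ∧ a ≠ w ∧ G.Adj u a ∧ ME a) ∨
     (a ≠ w ∧ b ≠ w ∧ G.Adj a b ∧ ¬(a = u ∧ ME b) ∧ ¬(b = u ∧ ME a)),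
   fun x => if x = w then {l | l ∈ G.label u ∧ ML l}
            else if x = u then {l | l ∈ G.label u ∧ ¬ ML l}
            else G.label x,
   fun x => if x = w then some i else G.bnd x⟩

/-- One extension step turning a `t`-boundaried graph into a `(t+1)`-boundaried one (up to
isomorphism): keep the graph unchanged, assign index `t+1` to a non-boundary vertex, or
split a boundary vertex. -/
def ExtOne (t : ℕ) (H H' : BLG X) : Prop :=
  Iso H' H ∨
  (∃ v ∈ H.verts, H.bnd v = none ∧ Iso H' (assignBnd H v (t + 1))) ∨
  (∃ u ∈ H.verts, ∃ i, H.bnd u = some i ∧ ∃ w, w ∉ H.verts ∧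
    ∃ ME : ℕ → Prop, ∃ ML : X → Prop, Iso H' (splitVx H u w (t + 1) ME ML))

/-- `H' ∈ ext_{+k}(H)` for a `t`-boundaried graph `H`: `k` successive extension steps. -/
def ExtN (t : ℕ) : ℕ → BLG X → BLG X → Prop
  | 0, H, H' => Iso H' H
  | k + 1, H, H' => ∃ H'', ExtN t k H H'' ∧ ExtOne (t + k) H'' H'

/-- `ext_{+k}` of a set of `t`-boundaried graphs. -/
def extSet (t k : ℕ) (S : Set (BLG X)) : Set (BLG X) := {H' | ∃ H ∈ S, ExtN t k H H'}

/-- `mpcs_{+t}(S)` for a set `S` of unboundaried graphs. -/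
def mpcsPlus (t : ℕ) (S : Set (BLG X)) : Set (BLG X) := mpcsSet (extSet 0 t S)

/-- `forget(G,k)`: forget the boundary status of all boundary vertices with index `> k`. -/
def forget (G : BLG X) (k : ℕ) : BLG X :=
  ⟨G.verts, G.Adj, G.label, fun v => (G.bnd v).bind fun i => if i ≤ k then some i else none⟩

/-- Membership in a set of graphs, up to isomorphism. -/
def MemIso (H : BLG X) (S : Set (BLG X)) : Prop := ∃ H' ∈ S, Iso H H'

/-- `G1` and `G2` share no edge: no edge between boundary indices `i,j` occurs in both. -/
def EdgeDisjoint (G1 G2 : BLG X) : Prop :=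
  ¬ ∃ i j, (∃ u v, G1.Adj u v ∧ G1.bnd u = some i ∧ G1.bnd v = some j) ∧
           (∃ u v, G2.Adj u v ∧ G2.bnd u = some i ∧ G2.bnd v = some j)

/-- The merge `Π1 ⊙_F Π2`. -/
def Merge (F : Set (BLG X)) (t : ℕ) (P1 P2 : Set (BLG X)) : Set (BLG X) :=
  {G | G ∈ mpcsPlus t F ∧ ∀ G1 G2 : BLG X, G1.WF t → G2.WF t → EdgeDisjoint G1 G2 →
    Iso (glue G1 G2) G →
    (∃ H ∈ P1, Minor H G1) ∨ (∃ H ∈ P2, Minor H G2)}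

/-- `(P1, P2) ∈ split_F(P)`: both contain `P`; for every `G ∈ P` and every subset `Y` of its
pieces, the sum over `Y` was added to `P1` or the sum over the complement was added to `P2`;
and every member of `P1`/`P2` is accounted for by one of the two addition rules. -/
def SplitMem (F : Set (BLG X)) (t : ℕ) (P P1 P2 : Set (BLG X)) : Prop :=
  P ⊆ P1 ∧ P ⊆ P2 ∧
  (∀ G ∈ P, ∀ Y ⊆ pcs G, MemIso (unionOf Y) P1 ∨ MemIso (unionOf (pcs G \ Y)) P2) ∧
  (∀ H ∈ P1, H ∈ P ∨ (∃ G ∈ P, ∃ Y ⊆ pcs G, Iso H (unionOf Y)) ∨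
    (H ∈ mpcsPlus t F ∧ ∃ H', Minor H' H ∧ MemIso H' P1)) ∧
  (∀ H ∈ P2, H ∈ P ∨ (∃ G ∈ P, ∃ Y ⊆ pcs G, Iso H (unionOf Y)) ∨
    (H ∈ mpcsPlus t F ∧ ∃ H', Minor H' H ∧ MemIso H' P2))

/-- `folio*_{Q,t}(G)`: the boundaried labeled minors of `G` lying in `mpcs_{+t}(Q)`. -/
def folioStar (Q : Set (BLG X)) (t : ℕ) (G : BLG X) : Set (BLG X) :=
  {H | H ∈ mpcsPlus t Q ∧ Minor H G}

/-- The `(t+1)`-boundaried graphs in which boundary index `t+1` is assigned to a vertex. -/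
def defBnd (t : ℕ) : Set (BLG X) := {G | ∃ v ∈ G.verts, G.bnd v = some t}


/-! ### Auxiliary lemmas for Statement 8 -/

lemma isoRefl (G : BLG X) : Iso G G :=
  ⟨id, Set.bijOn_id _, fun _ _ _ _ => Iff.rfl, fun _ _ => rfl, fun _ _ => rfl⟩

lemma reachIn_symm (G : BLG X) (hsym : ∀ u v, G.Adj u v → G.Adj v u) {S : Set ℕ} {a b : ℕ}
    (h : ReachIn G S a b) : ReachIn G S b a :=
  by
    induction h with
    | refl => exact Relation.ReflTransGen.refl
    | tail _ st ih => exact Relation.ReflTransGen.head ⟨hsym _ _ st.1, st.2.2, st.2.1⟩ ih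

lemma forget_self {t : ℕ} (G : BLG X) (hG : G.WF t) : forget G t = G := by
  have hb := hG.2.2.2.2.2.2
  obtain ⟨V, Ad, L, b⟩ := G
  simp only [forget, BLG.mk.injEq, true_and]
  funext v
  cases h : b v with
  | none => simp
  | some i =>
    have hi : i ≤ t := (hb v i h).2.2
    simp [hi]

lemma step {X : Type} (s t : ℕ) {G : BLG X} (hG : G.WF t) (H : BLG X)
    (hfin : H.verts.Finite) (hmin : Minor H (forget G s)) :
    ∃ H', ExtOne s H H' ∧ Minor H' (forget G (s + 1)) ∧ H'.verts.Finite := by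
  obtain ⟨φ, M⟩ := hmin
  have hsym := hG.2.1
  have hinj := hG.2.2.2.2.2.1
  have hfs : ∀ a j, (forget G s).bnd a = some j → G.bnd a = some j ∧ j ≤ s := by
    intro a j h
    simp only [forget] at h
    cases hga : G.bnd a with
    | none => rw [hga] at h; simp at h
    | some i =>
      rw [hga] at h
      by_cases hi : i ≤ s
      · simp only [Option.bind_some, if_pos hi] at h
        obtain rfl : i = j := Option.some.inj h
        exact ⟨rfl, hi⟩
      · simp [hi] at h
  have hgs' : ∀ a j, G.bnd a = some j → j ≤ s + 1 → (forget G (s+1)).bnd a = some j := by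
    intro a j h hj; simp [forget, h, hj]
  by_cases hv0 : ∃ v₀, G.bnd v₀ = some (s + 1)
  · obtain ⟨v₀, hv₀⟩ := hv0
    have huniq : ∀ a, G.bnd a = some (s+1) → a = v₀ := fun a ha => hinj a v₀ _ ha hv₀
    have key1 : ∀ a, a ≠ v₀ → (forget G (s+1)).bnd a = (forget G s).bnd a := by
      intro a ha
      simp only [forget]
      cases hga : G.bnd a with
      | none => simp
      | some i =>
        by_cases hi : i ≤ s
        · simp [hi, Nat.le_succ_of_le hi]
        · have hi' : ¬ i ≤ s + 1 := by
            intro h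
            have hie : i = s + 1 := by omega
            exact ha (huniq a (hie ▸ hga))
          simp [hi, hi']
    have key2 : (forget G (s+1)).bnd v₀ = some (s+1) := hgs' v₀ _ hv₀ le_rfl
    have key3 : (forget G s).bnd v₀ = none := by
      simp [forget, hv₀]
    by_cases hin : ∃ v ∈ H.verts, v₀ ∈ φ v
    · obtain ⟨v, hvH, hv₀φ⟩ := hin
      have hnotin : ∀ p ∈ H.verts, p ≠ v → v₀ ∉ φ p := by
        intro p hp hpv hmem
        exact Set.disjoint_left.mp (M.disj p hp v hvH hpv) hmem hv₀φ
      cases hb : H.bnd v with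
      | none =>
        refine ⟨assignBnd H v (s+1), Or.inr (Or.inl ⟨v, hvH, hb, isoRefl _⟩), ⟨φ, ?_⟩, hfin⟩
        refine ⟨M.sub, M.nonempty, M.conn, M.disj, M.edge, ?_, ?_, M.labels⟩
        · intro p hp hpb a ha
          have hpb' : Function.update H.bnd v (some (s+1)) p = none := hpb
          have hpv : p ≠ v := by
            intro e; subst e
            rw [Function.update_self] at hpb'
            exact Option.some_ne_none _ hpb'
          rw [Function.update_of_ne hpv] at hpb'
          have hav : a ≠ v₀ := fun e => hnotin p hp hpv (e ▸ ha)
          rw [key1 a hav]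
          exact M.bnd_none p hp hpb' a ha
        · intro p hp j hj
          have hj' : Function.update H.bnd v (some (s+1)) p = some j := hj
          by_cases hpv : p = v
          · subst hpv
            rw [Function.update_self] at hj'
            injection hj' with hjs
            subst hjs
            refine ⟨?_, v₀, hv₀φ, key2⟩
            intro a ha
            by_cases hav : a = v₀
            · subst hav; exact Or.inr key2
            · rw [key1 a hav]
              exact Or.inl (M.bnd_none p hp hb a ha)
          · rw [Function.update_of_ne hpv] at hj'
            obtain ⟨h1, c, hc, h2⟩ := M.bnd_some p hp j hj'
            have hcv : c ≠ v₀ := fun e => hnotin p hp hpv (e ▸ hc)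
            refine ⟨fun a ha => ?_, c, hc, by rw [key1 c hcv]; exact h2⟩
            have hav : a ≠ v₀ := fun e => hnotin p hp hpv (e ▸ ha)
            rw [key1 a hav]
            exact h1 a ha
      | some i =>
        obtain ⟨hall, a_i, haiS, hai⟩ := M.bnd_some v hvH i hb
        have haiG := hfs a_i i hai
        have hne : v₀ ≠ a_i := by
          intro e; rw [e, hai] at key3; exact Option.some_ne_none _ key3
        have hSsub : φ v ⊆ G.verts := M.sub v hvH
        set S : Set ℕ := φ v with hS
        set T : Set ℕ := {x | x ∈ S ∧ x ≠ a_i} with hT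
        set B : Set ℕ := {x | x ∈ T ∧ ReachIn G T v₀ x} with hBdef
        set A : Set ℕ := S \ B with hAdef
        have hBS : B ⊆ S := fun x hx => hx.1.1
        have hAS : A ⊆ S := fun x hx => hx.1
        have hv₀B : v₀ ∈ B := ⟨⟨hv₀φ, hne⟩, Relation.ReflTransGen.refl⟩
        have haiB : a_i ∉ B := fun h => h.1.2 rfl
        have haiA : a_i ∈ A := ⟨haiS, haiB⟩
        have hv₀A : v₀ ∉ A := fun h => h.2 hv₀B
        have hABd : Disjoint A B := Set.disjoint_left.mpr (fun x hx => hx.2)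
        have hmemAB : ∀ x ∈ S, x ∈ A ∨ x ∈ B := by
          intro x hx
          by_cases h : x ∈ B
          · exact Or.inr h
          · exact Or.inl ⟨hx, h⟩
        have hcl : ∀ y ∈ B, ∀ x, G.Adj y x → x ∈ S → x ≠ a_i → x ∈ B := by
          intro y hy x hadj hxS hxa
          exact ⟨⟨hxS, hxa⟩, hy.2.tail ⟨hadj, hy.1, ⟨hxS, hxa⟩⟩⟩
        have hBreach : ∀ x ∈ B, ReachIn G B v₀ x := by
          intro x hx
          have h := hx.2
          clear hx
          induction h with
          | refl => exact Relation.ReflTransGen.refl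
          | tail h' st ih =>
            exact Relation.ReflTransGen.tail ih ⟨st.1, ⟨st.2.1, h'⟩, ⟨st.2.2, h'.tail st⟩⟩
        have hBconn : ∀ a ∈ B, ∀ c ∈ B, ReachIn G B a c := fun a ha c hc =>
          (reachIn_symm G hsym (hBreach a ha)).trans (hBreach c hc)
        have hAreach : ∀ x, ReachIn G S x a_i → x ∉ B → ReachIn G A x a_i := by
          intro x hx
          induction hx using Relation.ReflTransGen.head_induction_on with
          | refl => intro _; exact Relation.ReflTransGen.refl
          | @head x' c st rest ih =>
            intro hxB
            by_cases hxa : x' = a_i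
            · subst hxa; exact Relation.ReflTransGen.refl
            · have hcB : c ∉ B := fun hc => hxB (hcl c hc x' (hsym _ _ st.1) st.2.1 hxa)
              exact Relation.ReflTransGen.head ⟨st.1, ⟨st.2.1, hxB⟩, ⟨st.2.2, hcB⟩⟩ (ih hcB)
        have hAconn : ∀ a ∈ A, ∀ c ∈ A, ReachIn G A a c := by
          intro a ha c hc
          have h1 : ReachIn G S a a_i := M.conn v hvH a (hAS ha) a_i haiS
          have h2 : ReachIn G S c a_i := M.conn v hvH c (hAS hc) a_i haiS
          exact (hAreach a h1 ha.2).trans (reachIn_symm G hsym (hAreach c h2 hc.2))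
        have hedgeAB : ∃ b ∈ B, ∃ c ∈ A, G.Adj b c := by
          have hgen : ∀ x, ReachIn G S x a_i → x ∈ B → ∃ b ∈ B, ∃ c ∈ A, G.Adj b c := by
            intro x hx
            induction hx using Relation.ReflTransGen.head_induction_on with
            | refl => intro h; exact absurd h haiB
            | @head x' c st rest ih =>
              intro hxB
              by_cases hc : c ∈ B
              · exact ih hc
              · exact ⟨x', hxB, c, ⟨st.2.2, hc⟩, st.1⟩
          exact hgen v₀ (M.conn v hvH v₀ hv₀φ a_i haiS) hv₀B
        -- choose a fresh vertex
        obtain ⟨w, hw⟩ := hfin.infinite_compl.nonempty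
        have hwH : w ∉ H.verts := hw
        have hwv : w ≠ v := fun e => hwH (by rw [e]; exact hvH)
        have hne_w : ∀ p ∈ H.verts, p ≠ w := fun p hp e => hwH (e ▸ hp)
        set φ' : ℕ → Set ℕ := fun p => if p = w then B else if p = v then A else φ p with hφ'
        set ME : ℕ → Prop := fun q => ¬ ∃ x ∈ A, ∃ y ∈ φ' q, G.Adj x y with hME
        set ML : X → Prop := fun l => ¬ ∃ a ∈ A, l ∈ G.label a with hML
        have hφ'w : φ' w = B := by simp [hφ']
        have hφ'v : φ' v = A := by simp [hφ', Ne.symm hwv]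
        have hφ'o : ∀ p, p ≠ w → p ≠ v → φ' p = φ p := fun p h1 h2 => by simp [hφ', h1, h2]
        have hbndA : ∀ a ∈ A, (forget G (s+1)).bnd a = none ∨ (forget G (s+1)).bnd a = some i := by
          intro a ha
          have hav : a ≠ v₀ := fun e => hv₀A (e ▸ ha)
          rw [key1 a hav]
          exact hall a (hAS ha)
        have hbndB : ∀ a ∈ B, (forget G (s+1)).bnd a = none ∨ a = v₀ := by
          intro a ha
          by_cases hav : a = v₀
          · exact Or.inr hav
          · rcases hall a (hBS ha) with h | h
            · rw [key1 a hav]; exact Or.inl h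
            · exfalso
              have hga : G.bnd a = some i := (hfs a i h).1
              have : a = a_i := hinj a a_i i hga haiG.1
              exact ha.1.2 this
        refine ⟨splitVx H v w (s+1) ME ML,
          Or.inr (Or.inr ⟨v, hvH, i, hb, w, hwH, ME, ML, isoRefl _⟩), ⟨φ', ?_⟩, hfin.insert w⟩
        have hmemW : ∀ p, p ∈ (splitVx H v w (s+1) ME ML).verts → p = w ∨ p ∈ H.verts :=
          fun p hp => Set.mem_insert_iff.mp hp
        refine ⟨?_, ?_, ?_, ?_, ?_, ?_, ?_, ?_⟩
        · -- sub
          intro p hp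
          rcases hmemW p hp with rfl | hpH
          · rw [hφ'w]; exact hBS.trans hSsub
          · by_cases hpv : p = v
            · subst hpv; rw [hφ'v]; exact hAS.trans hSsub
            · rw [hφ'o p (hne_w p hpH) hpv]; exact M.sub p hpH
        · -- nonempty
          intro p hp
          rcases hmemW p hp with rfl | hpH
          · rw [hφ'w]; exact ⟨v₀, hv₀B⟩
          · by_cases hpv : p = v
            · subst hpv; rw [hφ'v]; exact ⟨a_i, haiA⟩
            · rw [hφ'o p (hne_w p hpH) hpv]; exact M.nonempty p hpH
        · -- conn
          intro p hp a ha c hc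
          rcases hmemW p hp with rfl | hpH
          · rw [hφ'w] at ha hc ⊢; exact hBconn a ha c hc
          · by_cases hpv : p = v
            · subst hpv; rw [hφ'v] at ha hc ⊢; exact hAconn a ha c hc
            · rw [hφ'o p (hne_w p hpH) hpv] at ha hc ⊢; exact M.conn p hpH a ha c hc
        · -- disj
          intro p hp q hq hpq
          rcases hmemW p hp with rfl | hpH
          · rcases hmemW q hq with rfl | hqH
            · exact absurd rfl hpq
            · rw [hφ'w]
              by_cases hqv : q = v
              · subst hqv; rw [hφ'v]; exact hABd.symm
              · rw [hφ'o q (hne_w q hqH) hqv]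
                exact Disjoint.mono_left hBS (M.disj v hvH q hqH (fun e => hqv e.symm))
          · rcases hmemW q hq with rfl | hqH
            · rw [hφ'w]
              by_cases hpv : p = v
              · subst hpv; rw [hφ'v]; exact hABd
              · rw [hφ'o p (hne_w p hpH) hpv]
                exact Disjoint.mono_right hBS (M.disj p hpH v hvH hpv)
            · by_cases hpv : p = v
              · by_cases hqv : q = v
                · exact absurd (hpv.trans hqv.symm) hpq
                · rw [hpv, hφ'v, hφ'o q (hne_w q hqH) hqv]
                  exact Disjoint.mono_left hAS (M.disj v hvH q hqH (fun e => hqv e.symm))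
              · by_cases hqv : q = v
                · rw [hqv, hφ'v, hφ'o p (hne_w p hpH) hpv]
                  exact Disjoint.mono_right hAS (M.disj p hpH v hvH hpv)
                · rw [hφ'o p (hne_w p hpH) hpv, hφ'o q (hne_w q hqH) hqv]
                  exact M.disj p hpH q hqH hpq
        · -- edge
          intro p hp q hq hadj
          have hadj' : (p = w ∧ q = v) ∨ (p = v ∧ q = w) ∨
              (p = w ∧ q ≠ w ∧ H.Adj v q ∧ ME q) ∨ (q = w ∧ p ≠ w ∧ H.Adj v p ∧ ME p) ∨
              (p ≠ w ∧ q ≠ w ∧ H.Adj p q ∧ ¬(p = v ∧ ME q) ∧ ¬(q = v ∧ ME p)) := hadj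
          obtain ⟨b0, hb0, c0, hc0, hbc0⟩ := hedgeAB
          rcases hadj' with ⟨rfl, rfl⟩ | ⟨rfl, rfl⟩ | ⟨rfl, hqw, hAdj, hMEq⟩ |
            ⟨rfl, hpw, hAdj, hMEp⟩ | ⟨hpw, hqw, hAdj, hn1, hn2⟩
          · rw [hφ'w, hφ'v]; exact ⟨b0, hb0, c0, hc0, hbc0⟩
          · rw [hφ'w, hφ'v]; exact ⟨c0, hc0, b0, hb0, hsym _ _ hbc0⟩
          · rw [hφ'w]
            by_cases hqv : q = v
            · subst hqv; rw [hφ'v]; exact ⟨b0, hb0, c0, hc0, hbc0⟩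
            · have hqH : q ∈ H.verts := (hmemW q hq).resolve_left hqw
              obtain ⟨a, haS, c, hcq, hac⟩ := M.edge v hvH q hqH hAdj
              rw [hφ'o q hqw hqv]
              rcases hmemAB a haS with haA | haB
              · exfalso
                have hMEq' : ¬ ∃ x ∈ A, ∃ y ∈ φ' q, G.Adj x y := hMEq
                exact hMEq' ⟨a, haA, c, by rw [hφ'o q hqw hqv]; exact hcq, hac⟩
              · exact ⟨a, haB, c, hcq, hac⟩
          · rw [hφ'w]
            by_cases hpv : p = v
            · subst hpv; rw [hφ'v]; exact ⟨c0, hc0, b0, hb0, hsym _ _ hbc0⟩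
            · have hpH : p ∈ H.verts := (hmemW p hp).resolve_left hpw
              obtain ⟨a, haS, c, hcp, hac⟩ := M.edge v hvH p hpH hAdj
              rw [hφ'o p hpw hpv]
              rcases hmemAB a haS with haA | haB
              · exfalso
                have hMEp' : ¬ ∃ x ∈ A, ∃ y ∈ φ' p, G.Adj x y := hMEp
                exact hMEp' ⟨a, haA, c, by rw [hφ'o p hpw hpv]; exact hcp, hac⟩
              · exact ⟨c, hcp, a, haB, hsym _ _ hac⟩
          · by_cases hpv : p = v
            · subst hpv
              have hnq : ¬ ME q := fun h => hn1 ⟨rfl, h⟩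
              have hq' : ∃ x ∈ A, ∃ y ∈ φ' q, G.Adj x y := not_not.mp hnq
              obtain ⟨x, hx, y, hy, hxy⟩ := hq'
              rw [hφ'v]
              exact ⟨x, hx, y, hy, hxy⟩
            · by_cases hqv : q = v
              · subst hqv
                have hnp : ¬ ME p := fun h => hn2 ⟨rfl, h⟩
                have hp' : ∃ x ∈ A, ∃ y ∈ φ' p, G.Adj x y := not_not.mp hnp
                obtain ⟨x, hx, y, hy, hxy⟩ := hp'
                rw [hφ'v]
                exact ⟨y, hy, x, hx, hsym _ _ hxy⟩
              · have hpH : p ∈ H.verts := (hmemW p hp).resolve_left hpw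
                have hqH : q ∈ H.verts := (hmemW q hq).resolve_left hqw
                rw [hφ'o p hpw hpv, hφ'o q hqw hqv]
                exact M.edge p hpH q hqH hAdj
        · -- bnd_none
          intro p hp hpb a ha
          have hpb' : (if p = w then some (s+1) else H.bnd p) = none := hpb
          by_cases hpw : p = w
          · rw [if_pos hpw] at hpb'; exact absurd hpb' (Option.some_ne_none _)
          · rw [if_neg hpw] at hpb'
            have hpH : p ∈ H.verts := (hmemW p hp).resolve_left hpw
            have hpv : p ≠ v := fun e => by rw [e, hb] at hpb'; exact Option.some_ne_none _ hpb'
            rw [hφ'o p hpw hpv] at ha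
            have hav : a ≠ v₀ := fun e => hnotin p hpH hpv (e ▸ ha)
            rw [key1 a hav]
            exact M.bnd_none p hpH hpb' a ha
        · -- bnd_some
          intro p hp j hj
          have hj' : (if p = w then some (s+1) else H.bnd p) = some j := hj
          by_cases hpw : p = w
          · subst hpw
            rw [if_pos rfl] at hj'
            injection hj' with hjs
            subst hjs
            rw [hφ'w]
            refine ⟨?_, v₀, hv₀B, key2⟩
            intro a ha
            rcases hbndB a ha with h | rfl
            · exact Or.inl h
            · exact Or.inr key2
          · rw [if_neg hpw] at hj'
            have hpH : p ∈ H.verts := (hmemW p hp).resolve_left hpw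
            by_cases hpv : p = v
            · subst hpv
              rw [hb] at hj'
              injection hj' with hji
              subst hji
              rw [hφ'v]
              refine ⟨hbndA, a_i, haiA, ?_⟩
              rw [key1 a_i (Ne.symm hne)]
              exact hai
            · rw [hφ'o p hpw hpv]
              obtain ⟨h1, c, hc, h2⟩ := M.bnd_some p hpH j hj'
              have hcv : c ≠ v₀ := fun e => hnotin p hpH hpv (e ▸ hc)
              refine ⟨fun a ha => ?_, c, hc, by rw [key1 c hcv]; exact h2⟩
              have hav : a ≠ v₀ := fun e => hnotin p hpH hpv (e ▸ ha)
              rw [key1 a hav]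
              exact h1 a ha
        · -- labels
          intro p hp x hx
          have hx' : x ∈ (if p = w then {l | l ∈ H.label v ∧ ML l}
              else if p = v then {l | l ∈ H.label v ∧ ¬ ML l} else H.label p) := hx
          by_cases hpw : p = w
          · subst hpw
            rw [if_pos rfl] at hx'
            obtain ⟨hxl, hxML⟩ := hx'
            obtain ⟨a, haS, hxa⟩ := M.labels v hvH x hxl
            rw [hφ'w]
            rcases hmemAB a haS with haA | haB
            · exfalso
              have hxML' : ¬ ∃ a ∈ A, x ∈ G.label a := hxML
              exact hxML' ⟨a, haA, hxa⟩
            · exact ⟨a, haB, hxa⟩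
          · rw [if_neg hpw] at hx'
            have hpH : p ∈ H.verts := (hmemW p hp).resolve_left hpw
            by_cases hpv : p = v
            · subst hpv
              rw [if_pos rfl] at hx'
              obtain ⟨hxl, hxnML⟩ := hx'
              have hx'' : ∃ a ∈ A, x ∈ G.label a := not_not.mp hxnML
              obtain ⟨a, haA, hxa⟩ := hx''
              rw [hφ'v]
              exact ⟨a, haA, hxa⟩
            · rw [if_neg hpv] at hx'
              rw [hφ'o p hpw hpv]
              exact M.labels p hpH x hx'
    · -- v₀ in no branch set
      push_neg at hin
      refine ⟨H, Or.inl (isoRefl H), ⟨φ, ?_⟩, hfin⟩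
      refine ⟨M.sub, M.nonempty, M.conn, M.disj, M.edge, ?_, ?_, M.labels⟩
      · intro p hp hpb a ha
        have hav : a ≠ v₀ := fun e => hin p hp (e ▸ ha)
        rw [key1 a hav]
        exact M.bnd_none p hp hpb a ha
      · intro p hp j hj
        obtain ⟨h1, c, hc, h2⟩ := M.bnd_some p hp j hj
        have hcv : c ≠ v₀ := fun e => hin p hp (e ▸ hc)
        refine ⟨fun a ha => ?_, c, hc, by rw [key1 c hcv]; exact h2⟩
        have hav : a ≠ v₀ := fun e => hin p hp (e ▸ ha)
        rw [key1 a hav]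
        exact h1 a ha
  · -- no vertex of index s+1 in G
    have heq : forget G (s+1) = forget G s := by
      simp only [forget, BLG.mk.injEq, true_and]
      funext a
      cases hga : G.bnd a with
      | none => simp
      | some i =>
        by_cases hi : i ≤ s
        · simp [hi, Nat.le_succ_of_le hi]
        · have hi' : ¬ i ≤ s + 1 := by
            intro h
            exact hv0 ⟨a, by rw [hga]; congr 1; omega⟩
          simp [hi, hi']
    exact ⟨H, Or.inl (isoRefl H), heq ▸ ⟨φ, M⟩, hfin⟩


/-- If `t ≥ t'`, `H` is a `t'`-boundaried `X`-labeled graph, `G` is a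
`t`-boundaried `X`-labeled graph, and `H` is a boundaried labeled minor of `forget(G,t')`,
then some `H' ∈ ext_{+(t−t')}(H)` is a boundaried labeled minor of `G`. -/
theorem stmt8 {X : Type} (t t' : ℕ) (htt' : t' ≤ t) (H G : BLG X)
    (hH : H.WF t') (hG : G.WF t) (hmin : Minor H (forget G t')) :
    ∃ H', ExtN t' (t - t') H H' ∧ Minor H' G := by
  have main : ∀ j : ℕ, t' + j ≤ t → ∃ H', ExtN t' j H H' ∧ Minor H' (forget G (t' + j)) ∧
      H'.verts.Finite := by
    intro j
    induction j with
    | zero => exact fun _ => ⟨H, isoRefl H, hmin, hH.1⟩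
    | succ k ih =>
      intro hle
      obtain ⟨H'', e, m, f⟩ := ih (by omega)
      obtain ⟨H', e1, m1, f1⟩ := step (t' + k) t hG H'' f m
      exact ⟨H', ⟨H'', e, e1⟩, m1, f1⟩
  obtain ⟨H', e, m, _⟩ := main (t - t') (by omega)
  have ht : t' + (t - t') = t := by omega
  rw [ht, forget_self G hG] at m
  exact ⟨H', e, m⟩

end

end FDel
end

section
/- Let H, G1, and G2 be t-boundaried X-labeled graphs. Then H is a boundaried labeled minor of G1 ⊕ G2 if and only if there exists a subset P ⊆ pcs(H) such that ⊕_{p∈P} p is a boundaried labeled minor of G1 and ⊕_{p∈pcs(H)\P} p is a boundaried labeled minor of G2. -/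
namespace FDel

open scoped Classical

noncomputable section

variable {X : Type}

/-! ### Auxiliary lemmas for Statement 9 -/

section Stmt9Aux

variable {t : ℕ} {G1 G2 H : BLG X}

lemma BLG.WF.adj_symm {G : BLG X} (h : G.WF t) : ∀ u v : ℕ, G.Adj u v → G.Adj v u := h.2.1
lemma BLG.WF.loopless {G : BLG X} (h : G.WF t) : ∀ v : ℕ, ¬ G.Adj v v := h.2.2.1
lemma BLG.WF.adj_mem {G : BLG X} (h : G.WF t) : ∀ u v : ℕ, G.Adj u v → u ∈ G.verts ∧ v ∈ G.verts :=
  h.2.2.2.1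
lemma BLG.WF.bnd_inj {G : BLG X} (h : G.WF t) :
    ∀ u v i, G.bnd u = some i → G.bnd v = some i → u = v := h.2.2.2.2.2.1
lemma BLG.WF.bnd_mem {G : BLG X} (h : G.WF t) : ∀ v i, G.bnd v = some i → v ∈ G.verts :=
  fun v i hv => (h.2.2.2.2.2.2 v i hv).1

lemma ReachIn.symm' {G : BLG X} (hs : ∀ u v, G.Adj u v → G.Adj v u) {S : Set ℕ} {a b : ℕ}
    (h : ReachIn G S a b) : ReachIn G S b a := by
  induction h with
  | refl => exact .refl
  | tail _ hstep ih =>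
      exact Relation.ReflTransGen.head ⟨hs _ _ hstep.1, hstep.2.2, hstep.2.1⟩ ih

lemma rmap_cases (G1 G2 : BLG X) (v : ℕ) :
    (∃ u i, G2.bnd v = some i ∧ G1.bnd u = some i ∧ u ∈ G1.verts ∧ rmap G1 G2 v = 2 * u) ∨
    ((¬ ∃ u, u ∈ G1.verts ∧ ∃ i, G2.bnd v = some i ∧ G1.bnd u = some i) ∧
      rmap G1 G2 v = 2 * v + 1) := by
  by_cases h : ∃ u, u ∈ G1.verts ∧ ∃ i, G2.bnd v = some i ∧ G1.bnd u = some i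
  · obtain ⟨hu, i, hbi, hbu⟩ := Classical.choose_spec h
    exact Or.inl ⟨_, i, hbi, hbu, hu, dif_pos h⟩
  · exact Or.inr ⟨h, dif_neg h⟩

lemma rmap_eq_two_mul (h1 : G1.WF t) {v u i : ℕ} (hv : G2.bnd v = some i)
    (hu : u ∈ G1.verts) (hbu : G1.bnd u = some i) : rmap G1 G2 v = 2 * u := by
  rcases rmap_cases G1 G2 v with ⟨u', i', hbi', hbu', hu', hr⟩ | ⟨hn, _⟩
  · rw [hv] at hbi'
    obtain rfl : i' = i := by injection hbi'.symm
    obtain rfl : u' = u := h1.bnd_inj u' u _ hbu' hbu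
    exact hr
  · exact absurd ⟨u, hu, i, hv, hbu⟩ hn

lemma rmap_even_shared {v : ℕ} (hv : rmap G1 G2 v % 2 = 0) :
    ∃ u i, G2.bnd v = some i ∧ G1.bnd u = some i ∧ u ∈ G1.verts ∧ rmap G1 G2 v = 2 * u := by
  rcases rmap_cases G1 G2 v with h | ⟨_, hr⟩
  · exact h
  · omega

lemma rmap_odd_eq {v : ℕ} (hv : rmap G1 G2 v % 2 = 1) : rmap G1 G2 v = 2 * v + 1 := by
  rcases rmap_cases G1 G2 v with ⟨u, i, _, _, _, hr⟩ | ⟨_, hr⟩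
  · omega
  · exact hr

lemma rmap_inj (h1 : G1.WF t) (h2 : G2.WF t) {u v : ℕ}
    (h : rmap G1 G2 u = rmap G1 G2 v) : u = v := by
  rcases rmap_cases G1 G2 u with ⟨a, i, hbu, hba, _, hru⟩ | ⟨_, hru⟩ <;>
    rcases rmap_cases G1 G2 v with ⟨b, j, hbv, hbb, _, hrv⟩ | ⟨_, hrv⟩
  · obtain rfl : a = b := by omega
    rw [hba] at hbb
    obtain rfl : i = j := by injection hbb
    exact h2.bnd_inj u v i hbu hbv
  · omega
  · omega
  · omega

lemma mem_glue_verts {x : ℕ} :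
    x ∈ (glue G1 G2).verts ↔
      (∃ u ∈ G1.verts, x = 2 * u) ∨ (∃ v ∈ G2.verts, x = rmap G1 G2 v) := by
  simp only [glue, Set.mem_union, Set.mem_image]
  constructor
  · rintro (⟨u, hu, rfl⟩ | ⟨v, hv, rfl⟩)
    · exact Or.inl ⟨u, hu, rfl⟩
    · exact Or.inr ⟨v, hv, rfl⟩
  · rintro (⟨u, hu, rfl⟩ | ⟨v, hv, rfl⟩)
    · exact Or.inl ⟨u, hu, rfl⟩
    · exact Or.inr ⟨v, hv, rfl⟩

lemma e1_mem_glue {u : ℕ} (hu : u ∈ G1.verts) : 2 * u ∈ (glue G1 G2).verts :=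
  mem_glue_verts.2 (Or.inl ⟨u, hu, rfl⟩)

lemma e2_mem_glue {v : ℕ} (hv : v ∈ G2.verts) : rmap G1 G2 v ∈ (glue G1 G2).verts :=
  mem_glue_verts.2 (Or.inr ⟨v, hv, rfl⟩)

lemma even_glue_verts {x : ℕ} (hx : x ∈ (glue G1 G2).verts) (he : x % 2 = 0) :
    ∃ u ∈ G1.verts, x = 2 * u := by
  rcases mem_glue_verts.1 hx with h | ⟨v, hv, rfl⟩
  · exact h
  · obtain ⟨u, i, _, _, hu, hr⟩ := rmap_even_shared (G1 := G1) (G2 := G2) he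
    exact ⟨u, hu, hr⟩

lemma odd_glue_verts {x : ℕ} (hx : x ∈ (glue G1 G2).verts) (ho : x % 2 = 1) :
    ∃ v ∈ G2.verts, x = rmap G1 G2 v ∧ x = 2 * v + 1 := by
  rcases mem_glue_verts.1 hx with ⟨u, _, rfl⟩ | ⟨v, hv, rfl⟩
  · omega
  · exact ⟨v, hv, rfl, rmap_odd_eq ho⟩

lemma glue_verts_def (G1 G2 : BLG X) :
    (glue G1 G2).verts = (fun v => 2 * v) '' G1.verts ∪ rmap G1 G2 '' G2.verts := rfl

lemma glue_bnd_def (G1 G2 : BLG X) (x : ℕ) : (glue G1 G2).bnd x =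
    if x ∈ (fun v => 2 * v) '' G1.verts ∪ rmap G1 G2 '' G2.verts then
      (if x % 2 = 0 then G1.bnd (x / 2) else G2.bnd (x / 2))
    else none := rfl

lemma glue_bnd_e1 {u : ℕ} (hu : u ∈ G1.verts) :
    (glue G1 G2).bnd (2 * u) = G1.bnd u := by
  have hm : 2 * u ∈ (fun v => 2 * v) '' G1.verts ∪ rmap G1 G2 '' G2.verts :=
    (glue_verts_def G1 G2) ▸ e1_mem_glue hu
  rw [glue_bnd_def, if_pos hm, if_pos (by omega)]
  congr 1
  omega

lemma glue_bnd_e2 {v : ℕ} (hv : v ∈ G2.verts) :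
    (glue G1 G2).bnd (rmap G1 G2 v) = G2.bnd v := by
  have hm : rmap G1 G2 v ∈ (fun v => 2 * v) '' G1.verts ∪ rmap G1 G2 '' G2.verts :=
    (glue_verts_def G1 G2) ▸ e2_mem_glue hv
  rw [glue_bnd_def, if_pos hm]
  rcases rmap_cases G1 G2 v with ⟨u, i, hbv, hbu, _, hr⟩ | ⟨_, hr⟩
  · rw [if_pos (by omega), hbv]
    have : rmap G1 G2 v / 2 = u := by omega
    rw [this, hbu]
  · rw [if_neg (by omega)]
    congr 1
    omega

lemma glue_bnd_mem {x i : ℕ} (h : (glue G1 G2).bnd x = some i) :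
    x ∈ (glue G1 G2).verts := by
  by_contra hx
  rw [glue_bnd_def, if_neg ((glue_verts_def G1 G2) ▸ hx)] at h
  exact nomatch h

lemma glue_bnd_inj (h1 : G1.WF t) (h2 : G2.WF t) {x y i : ℕ}
    (hx : (glue G1 G2).bnd x = some i) (hy : (glue G1 G2).bnd y = some i) : x = y := by
  have hxm := glue_bnd_mem hx
  have hym := glue_bnd_mem hy
  have key : ∀ z, z ∈ (glue G1 G2).verts → (glue G1 G2).bnd z = some i →
      (∃ u ∈ G1.verts, z = 2 * u ∧ G1.bnd u = some i) ∨
      (∃ v ∈ G2.verts, z = 2 * v + 1 ∧ G2.bnd v = some i ∧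
        ¬ ∃ u, u ∈ G1.verts ∧ ∃ j, G2.bnd v = some j ∧ G1.bnd u = some j) := by
    intro z hzm hzb
    rcases Nat.mod_two_eq_zero_or_one z with hpar | hpar
    · obtain ⟨u, hu, rfl⟩ := even_glue_verts hzm hpar
      rw [glue_bnd_e1 hu] at hzb
      exact Or.inl ⟨u, hu, rfl, hzb⟩
    · obtain ⟨v, hv, hzr, hz2⟩ := odd_glue_verts hzm hpar
      rw [hzr, glue_bnd_e2 hv] at hzb
      rcases rmap_cases G1 G2 v with ⟨u, j, _, _, _, hr⟩ | ⟨hn, _⟩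
      · rw [hzr] at hz2; omega
      · exact Or.inr ⟨v, hv, hz2, hzb, hn⟩
  rcases key x hxm hx with ⟨u, hu, rfl, hbu⟩ | ⟨v, hv, rfl, hbv, hn⟩ <;>
    rcases key y hym hy with ⟨u', hu', rfl, hbu'⟩ | ⟨v', hv', rfl, hbv', hn'⟩
  · obtain rfl := h1.bnd_inj u u' i hbu hbu'; rfl
  · exact absurd ⟨u, hu, i, hbv', hbu⟩ hn'
  · exact absurd ⟨u', hu', i, hbv, hbu'⟩ hn
  · obtain rfl := h2.bnd_inj v v' i hbv hbv'; rfl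

lemma glue_adj_cases {a b : ℕ} (h : (glue G1 G2).Adj a b) :
    (∃ u ∈ G1.verts, ∃ v ∈ G1.verts, G1.Adj u v ∧ a = 2 * u ∧ b = 2 * v) ∨
    (∃ u ∈ G2.verts, ∃ v ∈ G2.verts, G2.Adj u v ∧ a = rmap G1 G2 u ∧ b = rmap G1 G2 v) := h

lemma glue_adj_e1 {u v : ℕ} (hu : u ∈ G1.verts) (hv : v ∈ G1.verts) (h : G1.Adj u v) :
    (glue G1 G2).Adj (2 * u) (2 * v) := Or.inl ⟨u, hu, v, hv, h, rfl, rfl⟩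

lemma glue_adj_e2 {u v : ℕ} (hu : u ∈ G2.verts) (hv : v ∈ G2.verts) (h : G2.Adj u v) :
    (glue G1 G2).Adj (rmap G1 G2 u) (rmap G1 G2 v) := Or.inr ⟨u, hu, v, hv, h, rfl, rfl⟩

lemma glue_adj_symm (h1 : G1.WF t) (h2 : G2.WF t) {a b : ℕ}
    (h : (glue G1 G2).Adj a b) : (glue G1 G2).Adj b a := by
  rcases h with ⟨u, hu, v, hv, hadj, rfl, rfl⟩ | ⟨u, hu, v, hv, hadj, rfl, rfl⟩
  · exact Or.inl ⟨v, hv, u, hu, h1.adj_symm _ _ hadj, rfl, rfl⟩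
  · exact Or.inr ⟨v, hv, u, hu, h2.adj_symm _ _ hadj, rfl, rfl⟩

lemma glue_label_e1 {u : ℕ} {l : X} (hu : u ∈ G1.verts) (hl : l ∈ G1.label u) :
    l ∈ (glue G1 G2).label (2 * u) := Or.inl ⟨u, hu, rfl, hl⟩

lemma glue_label_e2 {v : ℕ} {l : X} (hv : v ∈ G2.verts) (hl : l ∈ G2.label v) :
    l ∈ (glue G1 G2).label (rmap G1 G2 v) := Or.inr ⟨v, hv, rfl, hl⟩

lemma glue_label_cases {x : ℕ} {l : X} (h : l ∈ (glue G1 G2).label x) :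
    (∃ u ∈ G1.verts, x = 2 * u ∧ l ∈ G1.label u) ∨
    (∃ v ∈ G2.verts, x = rmap G1 G2 v ∧ l ∈ G2.label v) := h

lemma mem_pcs_iff {p : BLG X} :
    p ∈ pcs H ↔
      ((∃ v ∈ H.verts, ∃ i, H.bnd v = some i ∧ p = singlePc v i (∅ : Set X)) ∨
      (∃ v ∈ H.verts, ∃ i, H.bnd v = some i ∧ ∃ l ∈ H.label v, p = singlePc v i {l}) ∨
      (∃ u v i j, H.Adj u v ∧ H.bnd u = some i ∧ H.bnd v = some j ∧ p = edgePc u v i j) ∨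
      (∃ C, IsCompOf H (interior H) C ∧ p = compPc H C)) := by
  simp only [pcs, Set.mem_union, Set.mem_setOf_eq]
  constructor
  · rintro (((h | h) | h) | h)
    · exact Or.inl h
    · exact Or.inr (Or.inl h)
    · exact Or.inr (Or.inr (Or.inl h))
    · exact Or.inr (Or.inr (Or.inr h))
  · rintro (h | h | h | h)
    · exact Or.inl (Or.inl (Or.inl h))
    · exact Or.inl (Or.inl (Or.inr h))
    · exact Or.inl (Or.inr h)
    · exact Or.inr h

lemma IsCompOf.subset {S C : Set ℕ} (hC : IsCompOf H S C) : C ⊆ S := by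
  obtain ⟨v, hv, rfl⟩ := hC
  exact fun w hw => hw.1

lemma IsCompOf.reach (hs : ∀ u v : ℕ, H.Adj u v → H.Adj v u) {S C : Set ℕ}
    (hC : IsCompOf H S C) {c w : ℕ} (hc : c ∈ C) (hw : w ∈ C) : ReachIn H S c w := by
  obtain ⟨v, hv, rfl⟩ := hC
  exact Relation.ReflTransGen.trans (ReachIn.symm' hs hc.2) hw.2

lemma IsCompOf.closed {S C : Set ℕ} (hC : IsCompOf H S C) {c w : ℕ}
    (hc : c ∈ C) (hw : w ∈ S) (h : H.Adj c w) : w ∈ C := by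
  obtain ⟨v, hv, rfl⟩ := hC
  exact ⟨hw, Relation.ReflTransGen.tail hc.2 ⟨h, hc.1, hw⟩⟩

/-- The component of the interior of `H` containing `v`. -/
def compOf (H : BLG X) (v : ℕ) : Set ℕ :=
  {w | w ∈ interior H ∧ ReachIn H (interior H) v w}

lemma compOf_isComp {v : ℕ} (hv : v ∈ interior H) : IsCompOf H (interior H) (compOf H v) :=
  ⟨v, hv, rfl⟩

lemma mem_compOf {v : ℕ} (hv : v ∈ interior H) : v ∈ compOf H v := ⟨hv, .refl⟩

lemma IsCompOf.eq_compOf (hs : ∀ u v : ℕ, H.Adj u v → H.Adj v u) {C : Set ℕ}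
    (hC : IsCompOf H (interior H) C) {v : ℕ} (hv : v ∈ C) : C = compOf H v := by
  obtain ⟨v0, hv0, rfl⟩ := hC
  ext w
  constructor
  · rintro ⟨hw, hr⟩
    exact ⟨hw, Relation.ReflTransGen.trans (ReachIn.symm' hs hv.2) hr⟩
  · rintro ⟨hw, hr⟩
    exact ⟨hw, Relation.ReflTransGen.trans hv.2 hr⟩

/-- Combined structural facts about a piece of `H`. -/
lemma pcs_spec (hH : H.WF t) {p : BLG X} (hp : p ∈ pcs H) :
    p.verts ⊆ H.verts ∧
    (∀ x ∈ p.verts, p.bnd x = H.bnd x) ∧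
    (∀ x, x ∉ p.verts → p.bnd x = none) ∧
    (∀ a b, p.Adj a b → H.Adj a b ∧ a ∈ p.verts ∧ b ∈ p.verts) ∧
    (∀ x l, l ∈ p.label x → l ∈ H.label x ∧ x ∈ p.verts) := by
  have hsingle : ∀ v i (L : Set X), v ∈ H.verts → H.bnd v = some i → L ⊆ H.label v →
      (singlePc v i L).verts ⊆ H.verts ∧
      (∀ x ∈ (singlePc v i L).verts, (singlePc v i L).bnd x = H.bnd x) ∧
      (∀ x, x ∉ (singlePc v i L).verts → (singlePc v i L).bnd x = none) ∧
      (∀ a b, (singlePc v i L).Adj a b → H.Adj a b ∧ a ∈ (singlePc v i L).verts ∧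
        b ∈ (singlePc v i L).verts) ∧
      (∀ x l, l ∈ (singlePc v i L).label x → l ∈ H.label x ∧ x ∈ (singlePc v i L).verts) := by
    intro v i L hv hb hL
    refine ⟨?_, ?_, ?_, ?_, ?_⟩
    · intro x hx
      obtain rfl : x = v := hx
      exact hv
    · intro x hx
      obtain rfl : x = v := hx
      show (if x = x then some i else none) = H.bnd x
      rw [if_pos rfl, hb]
    · intro x hx
      have hxv : ¬ x = v := fun h => hx h
      exact if_neg hxv
    · intro a b hab
      exact absurd hab (fun h => h)
    · intro x l hl
      by_cases hx : x = v
      · subst hx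
        have : l ∈ L := by simpa [singlePc, if_pos rfl] using hl
        exact ⟨hL this, rfl⟩
      · exact absurd hl (by simp [singlePc, if_neg hx])
  rcases mem_pcs_iff.1 hp with ⟨v, hv, i, hb, rfl⟩ | ⟨v, hv, i, hb, l, hl, rfl⟩ |
    ⟨u, v, i, j, hadj, hbu, hbv, rfl⟩ | ⟨C, hC, rfl⟩
  · exact hsingle v i ∅ hv hb (by simp)
  · exact hsingle v i {l} hv hb (by simpa using hl)
  · have huv : u ≠ v := fun h => hH.loopless v (h ▸ hadj)
    have huH : u ∈ H.verts := (hH.adj_mem u v hadj).1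
    have hvH : v ∈ H.verts := (hH.adj_mem u v hadj).2
    refine ⟨?_, ?_, ?_, ?_, ?_⟩
    · intro x hx
      rcases hx with rfl | rfl
      · exact huH
      · exact hvH
    · intro x hx
      rcases hx with rfl | rfl
      · show (if x = x then some i else if x = v then some j else none) = H.bnd x
        rw [if_pos rfl, hbu]
      · show (if x = u then some i else if x = x then some j else none) = H.bnd x
        rw [if_neg (Ne.symm huv), if_pos rfl, hbv]
    · intro x hx
      have h1 : ¬ x = u := fun h => hx (by simp [edgePc, h])
      have h2 : ¬ x = v := fun h => hx (by simp [edgePc, h])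
      show (if x = u then some i else if x = v then some j else none) = none
      rw [if_neg h1, if_neg h2]
    · intro a b hab
      rcases hab with ⟨rfl, rfl⟩ | ⟨rfl, rfl⟩
      · exact ⟨hadj, Or.inl rfl, Or.inr rfl⟩
      · exact ⟨hH.adj_symm _ _ hadj, Or.inr rfl, Or.inl rfl⟩
    · intro x l hl
      exact absurd hl (by simp [edgePc])
  · have hCsub : C ⊆ interior H := hC.subset
    have hVsub : (compPc H C).verts ⊆ H.verts := by
      intro x hx
      rcases hx with hx | hx
      · exact (hCsub hx).1
      · exact hx.1
    refine ⟨hVsub, ?_, ?_, ?_, ?_⟩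
    · intro x hx
      exact if_pos hx
    · intro x hx
      exact if_neg hx
    · intro a b hab
      exact ⟨hab.1, hab.2.1, hab.2.2.1⟩
    · intro x l hl
      by_cases hx : x ∈ C
      · have : l ∈ H.label x := by simpa [compPc, if_pos hx] using hl
        exact ⟨this, Or.inl hx⟩
      · exact absurd hl (by simp [compPc, if_neg hx])

lemma pcs_verts_subset (hH : H.WF t) {p : BLG X} (hp : p ∈ pcs H) : p.verts ⊆ H.verts :=
  (pcs_spec hH hp).1

lemma pcs_bnd_eq (hH : H.WF t) {p : BLG X} (hp : p ∈ pcs H) {x : ℕ} (hx : x ∈ p.verts) :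
    p.bnd x = H.bnd x := (pcs_spec hH hp).2.1 x hx

lemma pcs_bnd_none (hH : H.WF t) {p : BLG X} (hp : p ∈ pcs H) {x : ℕ} (hx : x ∉ p.verts) :
    p.bnd x = none := (pcs_spec hH hp).2.2.1 x hx

lemma pcs_adj (hH : H.WF t) {p : BLG X} (hp : p ∈ pcs H) {a b : ℕ} (h : p.Adj a b) :
    H.Adj a b ∧ a ∈ p.verts ∧ b ∈ p.verts := (pcs_spec hH hp).2.2.2.1 a b h

lemma pcs_label (hH : H.WF t) {p : BLG X} (hp : p ∈ pcs H) {x : ℕ} {l : X}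
    (h : l ∈ p.label x) : l ∈ H.label x ∧ x ∈ p.verts := (pcs_spec hH hp).2.2.2.2 x l h

lemma mem_unionOf_verts {P : Set (BLG X)} {x : ℕ} :
    x ∈ (unionOf P).verts ↔ ∃ p ∈ P, x ∈ p.verts := by
  simp [unionOf]

lemma mem_unionOf_label {P : Set (BLG X)} {x : ℕ} {l : X} :
    l ∈ (unionOf P).label x ↔ ∃ p ∈ P, l ∈ p.label x := by
  simp [unionOf]

lemma unionOf_adj {P : Set (BLG X)} {a b : ℕ} :
    (unionOf P).Adj a b ↔ ∃ p ∈ P, p.Adj a b := Iff.rfl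

lemma unionOf_bnd_def (P : Set (BLG X)) (x : ℕ) :
    (unionOf P).bnd x =
      if h : ∃ p, p ∈ P ∧ p.bnd x ≠ none then (Classical.choose h).bnd x else none := rfl

lemma unionOf_verts_subset (hH : H.WF t) {P : Set (BLG X)} (hP : P ⊆ pcs H) :
    (unionOf P).verts ⊆ H.verts := by
  intro x hx
  obtain ⟨p, hp, hxp⟩ := mem_unionOf_verts.1 hx
  exact pcs_verts_subset hH (hP hp) hxp

lemma unionOf_bnd_eq (hH : H.WF t) {P : Set (BLG X)} (hP : P ⊆ pcs H) {x : ℕ}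
    (hx : x ∈ (unionOf P).verts) : (unionOf P).bnd x = H.bnd x := by
  rw [unionOf_bnd_def]
  by_cases hc : ∃ p, p ∈ P ∧ p.bnd x ≠ none
  · rw [dif_pos hc]
    obtain ⟨hqP, hqb⟩ := Classical.choose_spec hc
    have hxq : x ∈ (Classical.choose hc).verts := by
      by_contra hxq
      exact hqb (pcs_bnd_none hH (hP hqP) hxq)
    exact pcs_bnd_eq hH (hP hqP) hxq
  · rw [dif_neg hc]
    obtain ⟨p, hp, hxp⟩ := mem_unionOf_verts.1 hx
    by_contra hne
    exact hc ⟨p, hp, by rw [pcs_bnd_eq hH (hP hp) hxp]; exact fun h => hne h.symm⟩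

lemma glue_bnd_none_odd {u : ℕ} (hu : u ∈ G2.verts)
    (h : (glue G1 G2).bnd (rmap G1 G2 u) = none) : rmap G1 G2 u % 2 = 1 := by
  rcases rmap_cases G1 G2 u with ⟨u', i, hbu, hbu', hu', hr⟩ | ⟨_, hr⟩
  · rw [glue_bnd_e2 hu, hbu] at h
    exact nomatch h
  · omega

lemma glue_shared_bnd {u : ℕ} (hu : u ∈ G2.verts) (he : rmap G1 G2 u % 2 = 0) :
    (glue G1 G2).bnd (rmap G1 G2 u) ≠ none := by
  obtain ⟨u', i, hbu, _, _, _⟩ := rmap_even_shared (G1 := G1) he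
  rw [glue_bnd_e2 hu, hbu]
  exact fun h => nomatch h

lemma glue_parity_step {a b : ℕ} (hadj : (glue G1 G2).Adj a b)
    (ha : (glue G1 G2).bnd a = none) (hb : (glue G1 G2).bnd b = none) : a % 2 = b % 2 := by
  rcases hadj with ⟨u, hu, v, hv, _, rfl, rfl⟩ | ⟨u, hu, v, hv, _, rfl, rfl⟩
  · omega
  · have h1 := glue_bnd_none_odd hu ha
    have h2 := glue_bnd_none_odd hv hb
    omega

lemma glue_adj_even_none {a b : ℕ} (hadj : (glue G1 G2).Adj a b) (pa : a % 2 = 0)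
    (ha : (glue G1 G2).bnd a = none) :
    ∃ u v, u ∈ G1.verts ∧ v ∈ G1.verts ∧ G1.Adj u v ∧ a = 2 * u ∧ b = 2 * v := by
  rcases hadj with ⟨u, hu, v, hv, hadj, rfl, rfl⟩ | ⟨u, hu, v, hv, hadj, rfl, rfl⟩
  · exact ⟨u, v, hu, hv, hadj, rfl, rfl⟩
  · have := glue_bnd_none_odd hu ha
    omega

lemma glue_adj_odd_fst {a b : ℕ} (hadj : (glue G1 G2).Adj a b) (pa : a % 2 = 1) :
    ∃ u v, u ∈ G2.verts ∧ v ∈ G2.verts ∧ G2.Adj u v ∧ a = rmap G1 G2 u ∧ b = rmap G1 G2 v := by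
  rcases hadj with ⟨u, hu, v, hv, hadj, rfl, rfl⟩ | ⟨u, hu, v, hv, hadj, rfl, rfl⟩
  · omega
  · exact ⟨u, v, hu, hv, hadj, rfl, rfl⟩

lemma glue_adj_even_odd {a b : ℕ} (hadj : (glue G1 G2).Adj a b) (pa : a % 2 = 0)
    (pb : b % 2 = 1) : (glue G1 G2).bnd a ≠ none := by
  rcases hadj with ⟨u, hu, v, hv, _, rfl, rfl⟩ | ⟨u, hu, v, hv, _, rfl, rfl⟩
  · omega
  · exact glue_shared_bnd hu pa

lemma glue_adj_even_even (h1 : G1.WF t) (h2 : G2.WF t) {S : Set ℕ}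
    (huniq : ∀ x ∈ S, ∀ y ∈ S, (glue G1 G2).bnd x ≠ none → (glue G1 G2).bnd y ≠ none → x = y)
    {a b : ℕ} (ha : a ∈ S) (hb : b ∈ S) (hadj : (glue G1 G2).Adj a b)
    (pa : a % 2 = 0) (pb : b % 2 = 0) :
    ∃ u v, u ∈ G1.verts ∧ v ∈ G1.verts ∧ G1.Adj u v ∧ a = 2 * u ∧ b = 2 * v := by
  rcases hadj with ⟨u, hu, v, hv, hadj, rfl, rfl⟩ | ⟨u, hu, v, hv, hadj, rfl, rfl⟩
  · exact ⟨u, v, hu, hv, hadj, rfl, rfl⟩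
  · have heq := huniq _ ha _ hb (glue_shared_bnd hu pa) (glue_shared_bnd hv pb)
    obtain rfl := rmap_inj h1 h2 heq
    exact absurd hadj (h2.loopless u)

lemma glue_adj_odd_odd {a b : ℕ} (hadj : (glue G1 G2).Adj a b) (pa : a % 2 = 1)
    (pb : b % 2 = 1) :
    ∃ u v, u ∈ G2.verts ∧ v ∈ G2.verts ∧ G2.Adj u v ∧ a = 2 * u + 1 ∧ b = 2 * v + 1 ∧
      a = rmap G1 G2 u ∧ b = rmap G1 G2 v := by
  obtain ⟨u, v, hu, hv, hadj', rfl, rfl⟩ := glue_adj_odd_fst hadj pa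
  exact ⟨u, v, hu, hv, hadj', rmap_odd_eq pa, rmap_odd_eq pb, rfl, rfl⟩

lemma reach_proj1 (h1 : G1.WF t) (h2 : G2.WF t) {S : Set ℕ}
    (huniq : ∀ x ∈ S, ∀ y ∈ S, (glue G1 G2).bnd x ≠ none → (glue G1 G2).bnd y ≠ none → x = y)
    {a b : ℕ} (hr : ReachIn (glue G1 G2) S a b) (hb : b % 2 = 0) :
    (a % 2 = 0 → ReachIn G1 {u | u ∈ G1.verts ∧ 2 * u ∈ S} (a / 2) (b / 2)) ∧
    (a % 2 = 1 → ∃ s ∈ S, s % 2 = 0 ∧ (glue G1 G2).bnd s ≠ none ∧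
      ReachIn G1 {u | u ∈ G1.verts ∧ 2 * u ∈ S} (s / 2) (b / 2)) := by
  induction hr using Relation.ReflTransGen.head_induction_on with
  | refl =>
      refine ⟨fun _ => .refl, fun ha => absurd hb (by omega)⟩
  | head step rest ih =>
      rename_i a c
      obtain ⟨hadj, haS, hcS⟩ := step
      constructor
      · intro pa
        by_cases pc : c % 2 = 0
        · obtain ⟨u, v, hu, hv, hG1, hau, hcv⟩ :=
            glue_adj_even_even h1 h2 huniq haS hcS hadj pa pc
          have hd1 : a / 2 = u := by omega
          have hd2 : c / 2 = v := by omega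
          refine Relation.ReflTransGen.head ?_ (hd2 ▸ ih.1 pc)
          rw [hd1]
          exact ⟨hG1, ⟨hu, hau ▸ haS⟩, ⟨hv, hcv ▸ hcS⟩⟩
        · obtain ⟨s, hsS, hse, hsb, hres⟩ := ih.2 (by omega)
          have hab : (glue G1 G2).bnd a ≠ none := glue_adj_even_odd hadj pa (by omega)
          obtain rfl := huniq _ hsS _ haS hsb hab
          exact hres
      · intro pa
        by_cases pc : c % 2 = 0
        · have hcb : (glue G1 G2).bnd c ≠ none :=
            glue_adj_even_odd (glue_adj_symm h1 h2 hadj) pc pa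
          exact ⟨c, hcS, pc, hcb, ih.1 pc⟩
        · obtain ⟨s, hsS, hse, hsb, hres⟩ := ih.2 (by omega)
          exact ⟨s, hsS, hse, hsb, hres⟩

lemma reach_proj2 (h1 : G1.WF t) (h2 : G2.WF t) {S : Set ℕ}
    (huniq : ∀ x ∈ S, ∀ y ∈ S, (glue G1 G2).bnd x ≠ none → (glue G1 G2).bnd y ≠ none → x = y)
    {a b : ℕ} (hr : ReachIn (glue G1 G2) S a b) (hb : b % 2 = 1) :
    (a % 2 = 1 → ReachIn G2 {u | u ∈ G2.verts ∧ rmap G1 G2 u ∈ S} (a / 2) (b / 2)) ∧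
    (a % 2 = 0 → ∃ s ∈ S, ∃ w, w ∈ G2.verts ∧ rmap G1 G2 w = s ∧ (glue G1 G2).bnd s ≠ none ∧
      ReachIn G2 {u | u ∈ G2.verts ∧ rmap G1 G2 u ∈ S} w (b / 2)) := by
  induction hr using Relation.ReflTransGen.head_induction_on with
  | refl =>
      refine ⟨fun _ => .refl, fun ha => absurd hb (by omega)⟩
  | head step rest ih =>
      rename_i a c
      obtain ⟨hadj, haS, hcS⟩ := step
      constructor
      · intro pa
        by_cases pc : c % 2 = 1
        · obtain ⟨u, v, hu, hv, hG2, hau, hcv, hru, hrv⟩ := glue_adj_odd_odd hadj pa pc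
          have hd1 : a / 2 = u := by omega
          have hd2 : c / 2 = v := by omega
          refine Relation.ReflTransGen.head ?_ (hd2 ▸ ih.1 pc)
          rw [hd1]
          exact ⟨hG2, ⟨hu, hru ▸ haS⟩, ⟨hv, hrv ▸ hcS⟩⟩
        · obtain ⟨u, v, hu, hv, hG2, hau, hcv⟩ := glue_adj_odd_fst hadj pa
          have hcshared : (glue G1 G2).bnd c ≠ none := by
            rw [hcv]
            exact glue_shared_bnd hv (by omega)
          obtain ⟨s, hsS, w, hw, hws, hsb, hres⟩ := ih.2 (by omega)
          obtain rfl := huniq _ hsS _ hcS hsb hcshared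
          obtain rfl : w = v := rmap_inj h1 h2 (by rw [hws, hcv])
          have hd1 : a / 2 = u := by
            have := rmap_odd_eq (G1 := G1) (G2 := G2) (v := u) (hau ▸ pa)
            omega
          rw [hd1]
          exact Relation.ReflTransGen.head
            ⟨hG2, ⟨hu, hau ▸ haS⟩, ⟨hw, hws ▸ hsS⟩⟩ hres
      · intro pa
        by_cases pc : c % 2 = 1
        · rcases hadj with ⟨u, hu, v, hv, hadj', hau, hcv⟩ | ⟨u, hu, v, hv, hadj', hau, hcv⟩
          · omega
          · have hashared : (glue G1 G2).bnd a ≠ none := by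
              rw [hau]
              exact glue_shared_bnd hu (by omega)
            have hd2 : c / 2 = v := by
              have := rmap_odd_eq (G1 := G1) (G2 := G2) (v := v) (hcv ▸ pc)
              omega
            refine ⟨a, haS, u, hu, hau.symm, hashared, ?_⟩
            exact Relation.ReflTransGen.head
              ⟨hadj', ⟨hu, hau ▸ haS⟩, ⟨hv, hcv ▸ hcS⟩⟩ (hd2 ▸ ih.1 pc)
        · rcases hadj with ⟨u, hu, v, hv, hadj', hau, hcv⟩ | ⟨u, hu, v, hv, hadj', hau, hcv⟩
          · exact ih.2 (by omega)
          · have hashared : (glue G1 G2).bnd a ≠ none := by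
              rw [hau]
              exact glue_shared_bnd hu (by omega)
            have hcshared : (glue G1 G2).bnd c ≠ none := by
              rw [hcv]
              exact glue_shared_bnd hv (by omega)
            have heq := huniq _ haS _ hcS hashared hcshared
            rw [hau, hcv] at heq
            obtain rfl := rmap_inj h1 h2 heq
            exact absurd hadj' (h2.loopless u)

section ForwardAux

variable {φ : ℕ → Set ℕ}

lemma uniq_bnd (h1 : G1.WF t) (h2 : G2.WF t)
    (M : MinorModel H (glue G1 G2) φ) {v : ℕ} (hv : v ∈ H.verts) :
    ∀ x ∈ φ v, ∀ y ∈ φ v, (glue G1 G2).bnd x ≠ none → (glue G1 G2).bnd y ≠ none → x = y := by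
  intro x hx y hy hbx hby
  cases hbv : H.bnd v with
  | none =>
      exact absurd (M.bnd_none v hv hbv x hx) hbx
  | some i =>
      rcases (M.bnd_some v hv i hbv).1 x hx with h | h
      · exact absurd h hbx
      rcases (M.bnd_some v hv i hbv).1 y hy with h' | h'
      · exact absurd h' hby
      exact glue_bnd_inj h1 h2 h h'

lemma branch_all_even (M : MinorModel H (glue G1 G2) φ) {v : ℕ}
    (hv : v ∈ H.verts) (hb : H.bnd v = none) {a : ℕ} (ha : a ∈ φ v) (pa : a % 2 = 0) :
    ∀ b ∈ φ v, b % 2 = 0 := by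
  intro b hbm
  have hr := M.conn v hv a ha b hbm
  clear hbm
  induction hr with
  | refl => exact pa
  | tail _ hstep ih =>
      have h1 := M.bnd_none v hv hb _ hstep.2.1
      have h2 := M.bnd_none v hv hb _ hstep.2.2
      have := glue_parity_step hstep.1 h1 h2
      omega

lemma comp_all_even (hH : H.WF t) (M : MinorModel H (glue G1 G2) φ) {C : Set ℕ}
    (hC : IsCompOf H (interior H) C) {c : ℕ} (hc : c ∈ C) {a0 : ℕ} (ha0 : a0 ∈ φ c)
    (pa0 : a0 % 2 = 0) : ∀ w ∈ C, ∀ a ∈ φ w, a % 2 = 0 := by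
  intro w hw
  have hr := hC.reach hH.adj_symm hc hw
  clear hw
  induction hr with
  | refl => exact branch_all_even M (hC.subset hc).1 (hC.subset hc).2 ha0 pa0
  | tail _ hstep ih =>
      rename_i x y _
      obtain ⟨hxy, hxS, hyS⟩ := hstep
      obtain ⟨ax, hax, bx, hbx, hadj⟩ := M.edge x hxS.1 y hyS.1 hxy
      have pax : ax % 2 = 0 := ih ax hax
      have hbnx := M.bnd_none x hxS.1 hxS.2 _ hax
      have hbny := M.bnd_none y hyS.1 hyS.2 _ hbx
      have : ax % 2 = bx % 2 := glue_parity_step hadj hbnx hbny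
      exact branch_all_even M hyS.1 hyS.2 hbx (by omega)

lemma bnd_witness1 (h1 : G1.WF t) (h2 : G2.WF t)
    (M : MinorModel H (glue G1 G2) φ) {v i : ℕ} (hv : v ∈ H.verts)
    (hb : H.bnd v = some i) {a : ℕ} (ha : a ∈ φ v) (pa : a % 2 = 0) :
    ∃ u ∈ G1.verts, 2 * u ∈ φ v ∧ G1.bnd u = some i := by
  obtain ⟨b0, hb0, hbb0⟩ := (M.bnd_some v hv i hb).2
  rcases Nat.mod_two_eq_zero_or_one b0 with pb0 | pb0
  · obtain ⟨u, hu, rfl⟩ := even_glue_verts (M.sub v hv hb0) pb0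
    rw [glue_bnd_e1 hu] at hbb0
    exact ⟨u, hu, hb0, hbb0⟩
  · have hr := M.conn v hv b0 hb0 a ha
    obtain ⟨s, hsS, hse, hsb, _⟩ :=
      (reach_proj1 h1 h2 (uniq_bnd h1 h2 M hv) hr pa).2 pb0
    obtain rfl := uniq_bnd h1 h2 M hv s hsS b0 hb0 hsb (by rw [hbb0]; simp)
    omega

lemma bnd_witness2 (h1 : G1.WF t) (h2 : G2.WF t)
    (M : MinorModel H (glue G1 G2) φ) {v i : ℕ} (hv : v ∈ H.verts)
    (hb : H.bnd v = some i) {w : ℕ} (hw : w ∈ G2.verts) (hrw : rmap G1 G2 w ∈ φ v) :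
    ∃ u ∈ G2.verts, rmap G1 G2 u ∈ φ v ∧ G2.bnd u = some i := by
  obtain ⟨b0, hb0, hbb0⟩ := (M.bnd_some v hv i hb).2
  rcases Nat.mod_two_eq_zero_or_one b0 with pb0 | pb0
  · rcases Nat.mod_two_eq_zero_or_one (rmap G1 G2 w) with pw | pw
    · have hsh := glue_shared_bnd (G1 := G1) hw pw
      obtain rfl := uniq_bnd h1 h2 M hv _ hrw b0 hb0 hsh (by rw [hbb0]; simp)
      rw [glue_bnd_e2 hw] at hbb0
      exact ⟨w, hw, hrw, hbb0⟩
    · have hr := M.conn v hv b0 hb0 (rmap G1 G2 w) hrw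
      obtain ⟨s, hsS, w', hw', hws, hsb, _⟩ :=
        (reach_proj2 h1 h2 (uniq_bnd h1 h2 M hv) hr pw).2 pb0
      obtain rfl := uniq_bnd h1 h2 M hv s hsS b0 hb0 hsb (by rw [hbb0]; simp)
      subst hws
      rw [glue_bnd_e2 hw'] at hbb0
      exact ⟨w', hw', hsS, hbb0⟩
  · obtain ⟨u, hu, hbr, _⟩ := odd_glue_verts (M.sub v hv hb0) pb0
    rw [hbr, glue_bnd_e2 hu] at hbb0
    exact ⟨u, hu, hbr ▸ hb0, hbb0⟩

/-- The pieces of `H` assigned to the `G1` side of a minor model `φ` of `H` in `G1 ⊕ G2`. -/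
def fwdP (G1 G2 H : BLG X) (φ : ℕ → Set ℕ) : Set (BLG X) :=
  {p | ∃ v ∈ H.verts, ∃ i, H.bnd v = some i ∧ p = singlePc v i (∅ : Set X) ∧
        ∃ a ∈ φ v, (glue G1 G2).bnd a = some i ∧ a % 2 = 0} ∪
  {p | ∃ v ∈ H.verts, ∃ i, H.bnd v = some i ∧ ∃ l ∈ H.label v, p = singlePc v i {l} ∧
        ∃ u ∈ G1.verts, 2 * u ∈ φ v ∧ l ∈ G1.label u} ∪
  {p | ∃ u v i j, H.Adj u v ∧ H.bnd u = some i ∧ H.bnd v = some j ∧ p = edgePc u v i j ∧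
        ∃ a b, G1.Adj a b ∧ 2 * a ∈ φ u ∧ 2 * b ∈ φ v} ∪
  {p | ∃ C, IsCompOf H (interior H) C ∧ p = compPc H C ∧ ∃ c ∈ C, ∃ a ∈ φ c, a % 2 = 0}

lemma fwdP_subset : fwdP G1 G2 H φ ⊆ pcs H := by
  rintro p (((⟨v, hv, i, hb, rfl, _⟩ | ⟨v, hv, i, hb, l, hl, rfl, _⟩) |
    ⟨u, v, i, j, hadj, hbu, hbv, rfl, _⟩) | ⟨C, hC, rfl, _⟩)
  · exact mem_pcs_iff.2 (Or.inl ⟨v, hv, i, hb, rfl⟩)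
  · exact mem_pcs_iff.2 (Or.inr (Or.inl ⟨v, hv, i, hb, l, hl, rfl⟩))
  · exact mem_pcs_iff.2 (Or.inr (Or.inr (Or.inl ⟨u, v, i, j, hadj, hbu, hbv, rfl⟩)))
  · exact mem_pcs_iff.2 (Or.inr (Or.inr (Or.inr ⟨C, hC, rfl⟩)))

lemma mem_fwdP_iff {p : BLG X} :
    p ∈ fwdP G1 G2 H φ ↔
      ((∃ v ∈ H.verts, ∃ i, H.bnd v = some i ∧ p = singlePc v i (∅ : Set X) ∧
        ∃ a ∈ φ v, (glue G1 G2).bnd a = some i ∧ a % 2 = 0) ∨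
      (∃ v ∈ H.verts, ∃ i, H.bnd v = some i ∧ ∃ l ∈ H.label v, p = singlePc v i {l} ∧
        ∃ u ∈ G1.verts, 2 * u ∈ φ v ∧ l ∈ G1.label u) ∨
      (∃ u v i j, H.Adj u v ∧ H.bnd u = some i ∧ H.bnd v = some j ∧ p = edgePc u v i j ∧
        ∃ a b, G1.Adj a b ∧ 2 * a ∈ φ u ∧ 2 * b ∈ φ v) ∨
      (∃ C, IsCompOf H (interior H) C ∧ p = compPc H C ∧ ∃ c ∈ C, ∃ a ∈ φ c, a % 2 = 0)) := by
  simp only [fwdP, Set.mem_union, Set.mem_setOf_eq]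
  constructor
  · rintro (((h | h) | h) | h)
    · exact Or.inl h
    · exact Or.inr (Or.inl h)
    · exact Or.inr (Or.inr (Or.inl h))
    · exact Or.inr (Or.inr (Or.inr h))
  · rintro (h | h | h | h)
    · exact Or.inl (Or.inl (Or.inl h))
    · exact Or.inl (Or.inl (Or.inr h))
    · exact Or.inl (Or.inr h)
    · exact Or.inr h

lemma psi1_even_elt (h1 : G1.WF t) (h2 : G2.WF t) (hH : H.WF t)
    (M : MinorModel H (glue G1 G2) φ) {w : ℕ}
    (hw : w ∈ (unionOf (fwdP G1 G2 H φ)).verts) : ∃ u ∈ G1.verts, 2 * u ∈ φ w := by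
  obtain ⟨p, hp, hwp⟩ := mem_unionOf_verts.1 hw
  rcases mem_fwdP_iff.1 hp with ⟨v, hv, i, hb, rfl, a, ha, hba, pa⟩ |
    ⟨v, hv, i, hb, l, hl, rfl, u, hu, h2u, hlu⟩ |
    ⟨u', v', i, j, hadj, hbu, hbv, rfl, a, b, hG1, ha, hbφ⟩ |
    ⟨C, hC, rfl, c, hc, a0, ha0, pa0⟩
  · obtain rfl : w = v := hwp
    obtain ⟨u, hu, rfl⟩ := even_glue_verts (M.sub w hv ha) pa
    exact ⟨u, hu, ha⟩
  · obtain rfl : w = v := hwp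
    exact ⟨u, hu, h2u⟩
  · rcases hwp with rfl | rfl
    · exact ⟨a, (h1.adj_mem a b hG1).1, ha⟩
    · exact ⟨b, (h1.adj_mem a b hG1).2, hbφ⟩
  · rcases hwp with hwC | ⟨hwH, hwb, c', hc', hadj⟩
    · obtain ⟨a, ha⟩ := M.nonempty w (hC.subset hwC).1
      have pa : a % 2 = 0 := comp_all_even hH M hC hc ha0 pa0 w hwC a ha
      obtain ⟨u, hu, rfl⟩ := even_glue_verts (M.sub w (hC.subset hwC).1 ha) pa
      exact ⟨u, hu, ha⟩
    · obtain ⟨aw, haw, bc, hbc, hadjg⟩ :=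
        M.edge w hwH c' (hC.subset hc').1 hadj
      have pbc : bc % 2 = 0 := comp_all_even hH M hC hc ha0 pa0 c' hc' bc hbc
      have hbn : (glue G1 G2).bnd bc = none :=
        M.bnd_none c' (hC.subset hc').1 (hC.subset hc').2 bc hbc
      obtain ⟨u'', v'', hu'', hv'', hG1, hbc2, haw2⟩ :=
        glue_adj_even_none (glue_adj_symm h1 h2 hadjg) pbc hbn
      exact ⟨v'', hv'', haw2 ▸ haw⟩

lemma fwd_model1 (h1 : G1.WF t) (h2 : G2.WF t) (hH : H.WF t)
    (M : MinorModel H (glue G1 G2) φ) :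
    MinorModel (unionOf (fwdP G1 G2 H φ)) G1
      (fun w => {u | u ∈ G1.verts ∧ 2 * u ∈ φ w}) := by
  have hPp : fwdP G1 G2 H φ ⊆ pcs H := fwdP_subset
  have hVsub : (unionOf (fwdP G1 G2 H φ)).verts ⊆ H.verts := unionOf_verts_subset hH hPp
  constructor
  · -- sub
    intro v _ u hu
    exact hu.1
  · -- nonempty
    intro w hw
    obtain ⟨u, hu, h2u⟩ := psi1_even_elt h1 h2 hH M hw
    exact ⟨u, hu, h2u⟩
  · -- conn
    intro w hw a ha b hb
    have hwH := hVsub hw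
    have hr := M.conn w hwH (2 * a) ha.2 (2 * b) hb.2
    have h := (reach_proj1 h1 h2 (uniq_bnd h1 h2 M hwH) hr (by omega)).1 (by omega)
    have e1 : 2 * a / 2 = a := by omega
    have e2 : 2 * b / 2 = b := by omega
    rw [e1, e2] at h
    exact h
  · -- disj
    intro u hu v hv huv
    rw [Set.disjoint_left]
    intro x hxu hxv
    exact (Set.disjoint_left.1 (M.disj u (hVsub hu) v (hVsub hv) huv)) hxu.2 hxv.2
  · -- edge
    intro u hu v hv hadj
    obtain ⟨p, hp, hpadj⟩ := hadj
    rcases mem_fwdP_iff.1 hp with ⟨v', hv', i, hb, rfl, _⟩ |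
      ⟨v', hv', i, hb, l, hl, rfl, _⟩ |
      ⟨u', v', i, j, hadj', hbu, hbv, rfl, a, b, hG1, ha, hbφ⟩ |
      ⟨C, hC, rfl, c, hc, a0, ha0, pa0⟩
    · exact hpadj.elim
    · exact hpadj.elim
    · rcases hpadj with ⟨rfl, rfl⟩ | ⟨rfl, rfl⟩
      · exact ⟨a, ⟨(h1.adj_mem a b hG1).1, ha⟩, b, ⟨(h1.adj_mem a b hG1).2, hbφ⟩, hG1⟩
      · exact ⟨b, ⟨(h1.adj_mem a b hG1).2, hbφ⟩, a, ⟨(h1.adj_mem a b hG1).1, ha⟩,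
          h1.adj_symm a b hG1⟩
    · obtain ⟨hHadj, humem, hvmem, hnb⟩ := hpadj
      have huH := (hH.adj_mem u v hHadj).1
      have hvH := (hH.adj_mem u v hHadj).2
      by_cases hbu : H.bnd u = none
      · have huC : u ∈ C := by
          rcases humem with h | h
          · exact h
          · exact absurd hbu h.2.1
        obtain ⟨au, hau, bv, hbv', hadj'⟩ := M.edge u huH v hvH hHadj
        have pau : au % 2 = 0 := comp_all_even hH M hC hc ha0 pa0 u huC au hau
        have hbn : (glue G1 G2).bnd au = none := M.bnd_none u huH hbu au hau
        obtain ⟨u'', v'', hu'', hv'', hG1, hau2, hbv2⟩ :=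
          glue_adj_even_none hadj' pau hbn
        exact ⟨u'', ⟨hu'', hau2 ▸ hau⟩, v'', ⟨hv'', hbv2 ▸ hbv'⟩, hG1⟩
      · have hbv0 : H.bnd v = none := by
          by_contra hbv'
          exact hnb ⟨hbu, hbv'⟩
        have hvC : v ∈ C := by
          rcases hvmem with h | h
          · exact h
          · exact absurd hbv0 h.2.1
        obtain ⟨au, hau, bv, hbv', hadj'⟩ := M.edge u huH v hvH hHadj
        have pbv : bv % 2 = 0 := comp_all_even hH M hC hc ha0 pa0 v hvC bv hbv'
        have hbn : (glue G1 G2).bnd bv = none := M.bnd_none v hvH hbv0 bv hbv'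
        obtain ⟨u'', v'', hu'', hv'', hG1, hbv2, hau2⟩ :=
          glue_adj_even_none (glue_adj_symm h1 h2 hadj') pbv hbn
        exact ⟨v'', ⟨hv'', hau2 ▸ hau⟩, u'', ⟨hu'', hbv2 ▸ hbv'⟩, h1.adj_symm _ _ hG1⟩
  · -- bnd_none
    intro w hw hbw a ha
    rw [unionOf_bnd_eq hH hPp hw] at hbw
    have := M.bnd_none w (hVsub hw) hbw (2 * a) ha.2
    rw [glue_bnd_e1 ha.1] at this
    exact this
  · -- bnd_some
    intro w hw i hbw
    rw [unionOf_bnd_eq hH hPp hw] at hbw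
    constructor
    · intro a ha
      have := (M.bnd_some w (hVsub hw) i hbw).1 (2 * a) ha.2
      rw [glue_bnd_e1 ha.1] at this
      exact this
    · obtain ⟨u0, hu0, h2u0⟩ := psi1_even_elt h1 h2 hH M hw
      obtain ⟨u, hu, h2u, hbu⟩ :=
        bnd_witness1 h1 h2 M (hVsub hw) hbw h2u0 (by omega)
      exact ⟨u, ⟨hu, h2u⟩, hbu⟩
  · -- labels
    intro w hw x hx
    obtain ⟨p, hp, hxl⟩ := mem_unionOf_label.1 hx
    rcases mem_fwdP_iff.1 hp with ⟨v, hv, i, hb, rfl, _⟩ |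
      ⟨v, hv, i, hb, l, hl, rfl, u, hu, h2u, hlu⟩ |
      ⟨u', v', i, j, hadj', hbu, hbv, rfl, _⟩ |
      ⟨C, hC, rfl, c, hc, a0, ha0, pa0⟩
    · by_cases hwv : w = v <;> simp [singlePc, hwv] at hxl
    · by_cases hwv : w = v
      · subst hwv
        obtain rfl : x = l := by simpa [singlePc] using hxl
        exact ⟨u, ⟨hu, h2u⟩, hlu⟩
      · simp [singlePc, hwv] at hxl
    · simp [edgePc] at hxl
    · by_cases hwC : w ∈ C
      · have hxH : x ∈ H.label w := by simpa [compPc, hwC] using hxl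
        have hwH : w ∈ H.verts := (hC.subset hwC).1
        obtain ⟨a, ha, hxa⟩ := M.labels w hwH x hxH
        have pa : a % 2 = 0 := comp_all_even hH M hC hc ha0 pa0 w hwC a ha
        have hbn : (glue G1 G2).bnd a = none :=
          M.bnd_none w hwH (hC.subset hwC).2 a ha
        rcases glue_label_cases hxa with ⟨u, hu, rfl, hlu⟩ | ⟨u, hu, rfl, hlu⟩
        · exact ⟨u, ⟨hu, ha⟩, hlu⟩
        · exact absurd hbn (glue_shared_bnd hu pa)
      · simp [compPc, hwC] at hxl

lemma psi2_elt (h1 : G1.WF t) (h2 : G2.WF t) (hH : H.WF t)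
    (M : MinorModel H (glue G1 G2) φ) {w : ℕ}
    (hw : w ∈ (unionOf (pcs H \ fwdP G1 G2 H φ)).verts) :
    ∃ u ∈ G2.verts, rmap G1 G2 u ∈ φ w := by
  obtain ⟨p, hp, hwp⟩ := mem_unionOf_verts.1 hw
  rcases mem_pcs_iff.1 hp.1 with ⟨v, hv, i, hb, rfl⟩ | ⟨v, hv, i, hb, l, hl, rfl⟩ |
    ⟨u', v', i, j, hadj, hbu, hbv, rfl⟩ | ⟨C, hC, rfl⟩
  · obtain rfl : w = v := hwp
    obtain ⟨b0, hb0, hbb0⟩ := (M.bnd_some w hv i hb).2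
    rcases Nat.mod_two_eq_zero_or_one b0 with pb0 | pb0
    · exact absurd (mem_fwdP_iff.2 (Or.inl ⟨w, hv, i, hb, rfl, b0, hb0, hbb0, pb0⟩)) hp.2
    · obtain ⟨u, hu, rfl, _⟩ := odd_glue_verts (M.sub w hv hb0) pb0
      exact ⟨u, hu, hb0⟩
  · obtain rfl : w = v := hwp
    obtain ⟨a, ha, hxa⟩ := M.labels w hv l hl
    rcases glue_label_cases hxa with ⟨u, hu, rfl, hlu⟩ | ⟨u, hu, rfl, hlu⟩
    · exact absurd (mem_fwdP_iff.2 (Or.inr (Or.inl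
        ⟨w, hv, i, hb, l, hl, rfl, u, hu, ha, hlu⟩))) hp.2
    · exact ⟨u, hu, ha⟩
  · obtain ⟨a, ha, b, hbφ, hadjg⟩ :=
      M.edge u' (hH.adj_mem u' v' hadj).1 v' (hH.adj_mem u' v' hadj).2 hadj
    rcases hadjg with ⟨x, hx, y, hy, hG1, rfl, rfl⟩ | ⟨x, hx, y, hy, hG2, rfl, rfl⟩
    · exact absurd (mem_fwdP_iff.2 (Or.inr (Or.inr (Or.inl
        ⟨u', v', i, j, hadj, hbu, hbv, rfl, x, y, hG1, ha, hbφ⟩)))) hp.2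
    · rcases hwp with rfl | rfl
      · exact ⟨x, hx, ha⟩
      · exact ⟨y, hy, hbφ⟩
  · have hodd : ∀ c ∈ C, ∀ a ∈ φ c, a % 2 = 1 := by
      intro c hc a ha
      rcases Nat.mod_two_eq_zero_or_one a with pa | pa
      · exact absurd (mem_fwdP_iff.2 (Or.inr (Or.inr (Or.inr
          ⟨C, hC, rfl, c, hc, a, ha, pa⟩)))) hp.2
      · exact pa
    rcases hwp with hwC | ⟨hwH, hwb, c', hc', hadj⟩
    · obtain ⟨a, ha⟩ := M.nonempty w (hC.subset hwC).1
      obtain ⟨u, hu, rfl, _⟩ :=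
        odd_glue_verts (M.sub w (hC.subset hwC).1 ha) (hodd w hwC a ha)
      exact ⟨u, hu, ha⟩
    · obtain ⟨aw, haw, bc, hbc, hadjg⟩ :=
        M.edge w hwH c' (hC.subset hc').1 hadj
      obtain ⟨x, y, hx, hy, hG2, hbc2, haw2⟩ :=
        glue_adj_odd_fst (glue_adj_symm h1 h2 hadjg) (hodd c' hc' bc hbc)
      exact ⟨y, hy, haw2 ▸ haw⟩

lemma psi2_conn (h1 : G1.WF t) (h2 : G2.WF t)
    (M : MinorModel H (glue G1 G2) φ) {w : ℕ} (hwH : w ∈ H.verts) {a b : ℕ}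
    (ha : a ∈ G2.verts) (hra : rmap G1 G2 a ∈ φ w)
    (hb : b ∈ G2.verts) (hrb : rmap G1 G2 b ∈ φ w) :
    ReachIn G2 {u | u ∈ G2.verts ∧ rmap G1 G2 u ∈ φ w} a b := by
  have huniq := uniq_bnd h1 h2 M hwH
  have aux : ∀ x y : ℕ, x ∈ G2.verts → rmap G1 G2 x ∈ φ w → y ∈ G2.verts →
      rmap G1 G2 y ∈ φ w → rmap G1 G2 y % 2 = 1 →
      ReachIn G2 {u | u ∈ G2.verts ∧ rmap G1 G2 u ∈ φ w} x y := by
    intro x y hx hrx hy hry py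
    have hr := M.conn w hwH _ hrx _ hry
    have hdy : rmap G1 G2 y / 2 = y := by
      have := rmap_odd_eq (G1 := G1) (G2 := G2) (v := y) py
      omega
    rcases Nat.mod_two_eq_zero_or_one (rmap G1 G2 x) with px | px
    · obtain ⟨s, hsS, w', hw', hws, hsb, hres⟩ := (reach_proj2 h1 h2 huniq hr py).2 px
      obtain rfl := huniq _ hsS _ hrx hsb (glue_shared_bnd hx px)
      obtain rfl : w' = x := rmap_inj h1 h2 hws
      rw [hdy] at hres
      exact hres
    · have hdx : rmap G1 G2 x / 2 = x := by
        have := rmap_odd_eq (G1 := G1) (G2 := G2) (v := x) px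
        omega
      have := (reach_proj2 h1 h2 huniq hr py).1 px
      rw [hdx, hdy] at this
      exact this
  rcases Nat.mod_two_eq_zero_or_one (rmap G1 G2 b) with pb | pb
  · rcases Nat.mod_two_eq_zero_or_one (rmap G1 G2 a) with pa | pa
    · obtain rfl : a = b := by
        have := huniq _ hra _ hrb (glue_shared_bnd ha pa) (glue_shared_bnd hb pb)
        exact rmap_inj h1 h2 this
      exact .refl
    · exact ReachIn.symm' h2.adj_symm (aux b a hb hrb ha hra pa)
  · exact aux a b ha hra hb hrb pb

lemma fwd_model2 (h1 : G1.WF t) (h2 : G2.WF t) (hH : H.WF t)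
    (M : MinorModel H (glue G1 G2) φ) :
    MinorModel (unionOf (pcs H \ fwdP G1 G2 H φ)) G2
      (fun w => {u | u ∈ G2.verts ∧ rmap G1 G2 u ∈ φ w}) := by
  have hPp : pcs H \ fwdP G1 G2 H φ ⊆ pcs H := Set.diff_subset
  have hVsub := unionOf_verts_subset hH hPp
  constructor
  · -- sub
    intro v _ u hu
    exact hu.1
  · -- nonempty
    intro w hw
    obtain ⟨u, hu, hru⟩ := psi2_elt h1 h2 hH M hw
    exact ⟨u, hu, hru⟩
  · -- conn
    intro w hw a ha b hb
    exact psi2_conn h1 h2 M (hVsub hw) ha.1 ha.2 hb.1 hb.2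
  · -- disj
    intro u hu v hv huv
    rw [Set.disjoint_left]
    intro x hxu hxv
    exact (Set.disjoint_left.1 (M.disj u (hVsub hu) v (hVsub hv) huv)) hxu.2 hxv.2
  · -- edge
    intro u hu v hv hadj
    obtain ⟨p, hp, hpadj⟩ := hadj
    rcases mem_pcs_iff.1 hp.1 with ⟨v', hv', i, hb, rfl⟩ | ⟨v', hv', i, hb, l, hl, rfl⟩ |
      ⟨u', v', i, j, hadj', hbu, hbv, rfl⟩ | ⟨C, hC, rfl⟩
    · exact hpadj.elim
    · exact hpadj.elim
    · obtain ⟨a, ha, b, hbφ, hadjg⟩ :=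
        M.edge u' (hH.adj_mem u' v' hadj').1 v' (hH.adj_mem u' v' hadj').2 hadj'
      rcases hadjg with ⟨x, hx, y, hy, hG1, rfl, rfl⟩ | ⟨x, hx, y, hy, hG2, rfl, rfl⟩
      · exact absurd (mem_fwdP_iff.2 (Or.inr (Or.inr (Or.inl
          ⟨u', v', i, j, hadj', hbu, hbv, rfl, x, y, hG1, ha, hbφ⟩)))) hp.2
      · rcases hpadj with ⟨rfl, rfl⟩ | ⟨rfl, rfl⟩
        · exact ⟨x, ⟨hx, ha⟩, y, ⟨hy, hbφ⟩, hG2⟩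
        · exact ⟨y, ⟨hy, hbφ⟩, x, ⟨hx, ha⟩, h2.adj_symm _ _ hG2⟩
    · have hodd : ∀ c ∈ C, ∀ a ∈ φ c, a % 2 = 1 := by
        intro c hc a ha
        rcases Nat.mod_two_eq_zero_or_one a with pa | pa
        · exact absurd (mem_fwdP_iff.2 (Or.inr (Or.inr (Or.inr
            ⟨C, hC, rfl, c, hc, a, ha, pa⟩)))) hp.2
        · exact pa
      obtain ⟨hHadj, humem, hvmem, hnb⟩ := hpadj
      have huH := (hH.adj_mem u v hHadj).1
      have hvH := (hH.adj_mem u v hHadj).2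
      obtain ⟨au, hau, bv, hbv', hadj'⟩ := M.edge u huH v hvH hHadj
      by_cases hbu : H.bnd u = none
      · have huC : u ∈ C := by
          rcases humem with h | h
          · exact h
          · exact absurd hbu h.2.1
        obtain ⟨x, y, hx, hy, hG2, hau2, hbv2⟩ :=
          glue_adj_odd_fst hadj' (hodd u huC au hau)
        exact ⟨x, ⟨hx, hau2 ▸ hau⟩, y, ⟨hy, hbv2 ▸ hbv'⟩, hG2⟩
      · have hbv0 : H.bnd v = none := by
          by_contra hbv''
          exact hnb ⟨hbu, hbv''⟩
        have hvC : v ∈ C := by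
          rcases hvmem with h | h
          · exact h
          · exact absurd hbv0 h.2.1
        obtain ⟨x, y, hx, hy, hG2, hbv2, hau2⟩ :=
          glue_adj_odd_fst (glue_adj_symm h1 h2 hadj') (hodd v hvC bv hbv')
        exact ⟨y, ⟨hy, hau2 ▸ hau⟩, x, ⟨hx, hbv2 ▸ hbv'⟩, h2.adj_symm _ _ hG2⟩
  · -- bnd_none
    intro w hw hbw a ha
    rw [unionOf_bnd_eq hH hPp hw] at hbw
    have := M.bnd_none w (hVsub hw) hbw _ ha.2
    rw [glue_bnd_e2 ha.1] at this
    exact this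
  · -- bnd_some
    intro w hw i hbw
    rw [unionOf_bnd_eq hH hPp hw] at hbw
    constructor
    · intro a ha
      have := (M.bnd_some w (hVsub hw) i hbw).1 _ ha.2
      rw [glue_bnd_e2 ha.1] at this
      exact this
    · obtain ⟨w0, hw0, hrw0⟩ := psi2_elt h1 h2 hH M hw
      obtain ⟨u, hu, hru, hbu⟩ := bnd_witness2 h1 h2 M (hVsub hw) hbw hw0 hrw0
      exact ⟨u, ⟨hu, hru⟩, hbu⟩
  · -- labels
    intro w hw x hx
    obtain ⟨p, hp, hxl⟩ := mem_unionOf_label.1 hx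
    rcases mem_pcs_iff.1 hp.1 with ⟨v, hv, i, hb, rfl⟩ | ⟨v, hv, i, hb, l, hl, rfl⟩ |
      ⟨u', v', i, j, hadj', hbu, hbv, rfl⟩ | ⟨C, hC, rfl⟩
    · by_cases hwv : w = v <;> simp [singlePc, hwv] at hxl
    · by_cases hwv : w = v
      · subst hwv
        obtain rfl : x = l := by simpa [singlePc] using hxl
        obtain ⟨a, ha, hxa⟩ := M.labels w hv x hl
        rcases glue_label_cases hxa with ⟨u, hu, rfl, hlu⟩ | ⟨u, hu, rfl, hlu⟩
        · exact absurd (mem_fwdP_iff.2 (Or.inr (Or.inl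
            ⟨w, hv, i, hb, x, hl, rfl, u, hu, ha, hlu⟩))) hp.2
        · exact ⟨u, ⟨hu, ha⟩, hlu⟩
      · simp [singlePc, hwv] at hxl
    · simp [edgePc] at hxl
    · have hodd : ∀ c ∈ C, ∀ a ∈ φ c, a % 2 = 1 := by
        intro c hc a ha
        rcases Nat.mod_two_eq_zero_or_one a with pa | pa
        · exact absurd (mem_fwdP_iff.2 (Or.inr (Or.inr (Or.inr
            ⟨C, hC, rfl, c, hc, a, ha, pa⟩)))) hp.2
        · exact pa
      by_cases hwC : w ∈ C
      · have hxH : x ∈ H.label w := by simpa [compPc, hwC] using hxl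
        obtain ⟨a, ha, hxa⟩ := M.labels w (hC.subset hwC).1 x hxH
        have pa := hodd w hwC a ha
        rcases glue_label_cases hxa with ⟨u, hu, rfl, hlu⟩ | ⟨u, hu, rfl, hlu⟩
        · omega
        · exact ⟨u, ⟨hu, ha⟩, hlu⟩
      · simp [compPc, hwC] at hxl

end ForwardAux

section BackwardAux

lemma interior_piece (hH : H.WF t) {p : BLG X} (hp : p ∈ pcs H) {v : ℕ}
    (hv : v ∈ p.verts) (hbv : H.bnd v = none) : p = compPc H (compOf H v) := by
  rcases mem_pcs_iff.1 hp with ⟨v', hv', i, hb, rfl⟩ | ⟨v', hv', i, hb, l, hl, rfl⟩ |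
    ⟨u', v', i, j, hadj, hbu, hbv', rfl⟩ | ⟨C, hC, rfl⟩
  · obtain rfl : v = v' := hv
    exact absurd hbv (by rw [hb]; simp)
  · obtain rfl : v = v' := hv
    exact absurd hbv (by rw [hb]; simp)
  · rcases hv with rfl | rfl
    · exact absurd hbv (by rw [hbu]; simp)
    · exact absurd hbv (by rw [hbv']; simp)
  · rcases hv with hvC | hnbr
    · rw [hC.eq_compOf hH.adj_symm hvC]
    · exact absurd hbv (by_contra fun _ => hnbr.2.1 hbv)

/-- Branch sets in `G1 ⊕ G2` assembled from branch sets in `G1` and `G2`. -/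
def bwdPhi (G1 G2 U1 U2 : BLG X) (ψ1 ψ2 : ℕ → Set ℕ) (v : ℕ) : Set ℕ :=
  {x | (∃ u ∈ ψ1 v, v ∈ U1.verts ∧ x = 2 * u) ∨
       (∃ u ∈ ψ2 v, v ∈ U2.verts ∧ x = rmap G1 G2 u)}

lemma bwd_model (h1 : G1.WF t) (h2 : G2.WF t) (hH : H.WF t) {P : Set (BLG X)}
    (hP : P ⊆ pcs H) {ψ1 ψ2 : ℕ → Set ℕ}
    (M1 : MinorModel (unionOf P) G1 ψ1)
    (M2 : MinorModel (unionOf (pcs H \ P)) G2 ψ2) :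
    MinorModel H (glue G1 G2)
      (bwdPhi G1 G2 (unionOf P) (unionOf (pcs H \ P)) ψ1 ψ2) := by
  set U1 := unionOf P with hU1
  set U2 := unionOf (pcs H \ P) with hU2
  set Φ := bwdPhi G1 G2 U1 U2 ψ1 ψ2 with hΦ
  have hPc : pcs H \ P ⊆ pcs H := Set.diff_subset
  have hglue_symm : ∀ a b : ℕ, (glue G1 G2).Adj a b → (glue G1 G2).Adj b a :=
    fun a b => glue_adj_symm h1 h2
  have hmem1 : ∀ {v u : ℕ}, u ∈ ψ1 v → v ∈ U1.verts → 2 * u ∈ Φ v :=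
    fun hu hv => Or.inl ⟨_, hu, hv, rfl⟩
  have hmem2 : ∀ {v u : ℕ}, u ∈ ψ2 v → v ∈ U2.verts → rmap G1 G2 u ∈ Φ v :=
    fun hu hv => Or.inr ⟨_, hu, hv, rfl⟩
  have hcover : ∀ v ∈ H.verts, v ∈ U1.verts ∨ v ∈ U2.verts := by
    intro v hv
    cases hbv : H.bnd v with
    | some i =>
        have hpc : singlePc v i (∅ : Set X) ∈ pcs H :=
          mem_pcs_iff.2 (Or.inl ⟨v, hv, i, hbv, rfl⟩)
        have hvm : v ∈ (singlePc v i (∅ : Set X)).verts := rfl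
        by_cases hpP : singlePc v i (∅ : Set X) ∈ P
        · exact Or.inl (mem_unionOf_verts.2 ⟨_, hpP, hvm⟩)
        · exact Or.inr (mem_unionOf_verts.2 ⟨_, ⟨hpc, hpP⟩, hvm⟩)
    | none =>
        have hvi : v ∈ interior H := ⟨hv, hbv⟩
        have hpc : compPc H (compOf H v) ∈ pcs H :=
          mem_pcs_iff.2 (Or.inr (Or.inr (Or.inr ⟨compOf H v, compOf_isComp hvi, rfl⟩)))
        have hvm : v ∈ (compPc H (compOf H v)).verts := Or.inl (mem_compOf hvi)
        by_cases hpP : compPc H (compOf H v) ∈ P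
        · exact Or.inl (mem_unionOf_verts.2 ⟨_, hpP, hvm⟩)
        · exact Or.inr (mem_unionOf_verts.2 ⟨_, ⟨hpc, hpP⟩, hvm⟩)
  have hint1 : ∀ v, H.bnd v = none → v ∈ U1.verts → compPc H (compOf H v) ∈ P := by
    intro v hbv hv
    obtain ⟨p, hp, hvp⟩ := mem_unionOf_verts.1 hv
    rw [← interior_piece hH (hP hp) hvp hbv]
    exact hp
  have hint2 : ∀ v, H.bnd v = none → v ∈ U2.verts → compPc H (compOf H v) ∉ P := by
    intro v hbv hv
    obtain ⟨p, hp, hvp⟩ := mem_unionOf_verts.1 hv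
    rw [← interior_piece hH (hPc hp) hvp hbv]
    exact hp.2
  have honeside : ∀ v, H.bnd v = none → v ∈ U1.verts → v ∈ U2.verts → False :=
    fun v hbv h1' h2' => hint2 v hbv h2' (hint1 v hbv h1')
  have hb1 : ∀ v ∈ U1.verts, U1.bnd v = H.bnd v := fun v hv => unionOf_bnd_eq hH hP hv
  have hb2 : ∀ v ∈ U2.verts, U2.bnd v = H.bnd v := fun v hv => unionOf_bnd_eq hH hPc hv
  have lift1 : ∀ v ∈ U1.verts, ∀ a b : ℕ, ReachIn G1 (ψ1 v) a b →
      ReachIn (glue G1 G2) (Φ v) (2 * a) (2 * b) := by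
    intro v hv a b hr
    induction hr with
    | refl => exact .refl
    | tail _ hstep ih =>
        refine Relation.ReflTransGen.tail ih ⟨?_, hmem1 hstep.2.1 hv, hmem1 hstep.2.2 hv⟩
        exact glue_adj_e1 (M1.sub v hv hstep.2.1) (M1.sub v hv hstep.2.2) hstep.1
  have lift2 : ∀ v ∈ U2.verts, ∀ a b : ℕ, ReachIn G2 (ψ2 v) a b →
      ReachIn (glue G1 G2) (Φ v) (rmap G1 G2 a) (rmap G1 G2 b) := by
    intro v hv a b hr
    induction hr with
    | refl => exact .refl
    | tail _ hstep ih =>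
        refine Relation.ReflTransGen.tail ih ⟨?_, hmem2 hstep.2.1 hv, hmem2 hstep.2.2 hv⟩
        exact glue_adj_e2 (M2.sub v hv hstep.2.1) (M2.sub v hv hstep.2.2) hstep.1
  have hBndOf1 : ∀ v ∈ U1.verts, ∀ a ∈ ψ1 v, ∀ k, G1.bnd a = some k →
      H.bnd v = some k := by
    intro v hv a ha k hk
    cases hbv : H.bnd v with
    | none =>
        have := M1.bnd_none v hv (by rw [hb1 v hv, hbv]) a ha
        rw [hk] at this
        exact nomatch this
    | some j =>
        rcases (M1.bnd_some v hv j (by rw [hb1 v hv, hbv])).1 a ha with h | h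
        · rw [hk] at h
          exact nomatch h
        · rw [hk] at h
          obtain rfl : k = j := by injection h
          rfl
  have hBndOf2 : ∀ v ∈ U2.verts, ∀ a ∈ ψ2 v, ∀ k, G2.bnd a = some k →
      H.bnd v = some k := by
    intro v hv a ha k hk
    cases hbv : H.bnd v with
    | none =>
        have := M2.bnd_none v hv (by rw [hb2 v hv, hbv]) a ha
        rw [hk] at this
        exact nomatch this
    | some j =>
        rcases (M2.bnd_some v hv j (by rw [hb2 v hv, hbv])).1 a ha with h | h
        · rw [hk] at h
          exact nomatch h
        · rw [hk] at h
          obtain rfl : k = j := by injection h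
          rfl
  have hedge1 : ∀ u v : ℕ, U1.Adj u v → ∃ a ∈ Φ u, ∃ b ∈ Φ v, (glue G1 G2).Adj a b := by
    intro u v hadj
    obtain ⟨p, hp, hpadj⟩ := hadj
    have hum := (pcs_adj hH (hP hp) hpadj).2.1
    have hvm := (pcs_adj hH (hP hp) hpadj).2.2
    have hu1 : u ∈ U1.verts := mem_unionOf_verts.2 ⟨p, hp, hum⟩
    have hv1 : v ∈ U1.verts := mem_unionOf_verts.2 ⟨p, hp, hvm⟩
    obtain ⟨a, ha, b, hb, hG1⟩ := M1.edge u hu1 v hv1 ⟨p, hp, hpadj⟩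
    exact ⟨2 * a, hmem1 ha hu1, 2 * b, hmem1 hb hv1,
      glue_adj_e1 (M1.sub u hu1 ha) (M1.sub v hv1 hb) hG1⟩
  have hedge2 : ∀ u v : ℕ, U2.Adj u v → ∃ a ∈ Φ u, ∃ b ∈ Φ v, (glue G1 G2).Adj a b := by
    intro u v hadj
    obtain ⟨p, hp, hpadj⟩ := hadj
    have hum := (pcs_adj hH (hPc hp) hpadj).2.1
    have hvm := (pcs_adj hH (hPc hp) hpadj).2.2
    have hu2 : u ∈ U2.verts := mem_unionOf_verts.2 ⟨p, hp, hum⟩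
    have hv2 : v ∈ U2.verts := mem_unionOf_verts.2 ⟨p, hp, hvm⟩
    obtain ⟨a, ha, b, hb, hG2⟩ := M2.edge u hu2 v hv2 ⟨p, hp, hpadj⟩
    exact ⟨rmap G1 G2 a, hmem2 ha hu2, rmap G1 G2 b, hmem2 hb hv2,
      glue_adj_e2 (M2.sub u hu2 ha) (M2.sub v hv2 hb) hG2⟩
  have hedgeInt : ∀ u v : ℕ, H.Adj u v → H.bnd u = none →
      ∃ a ∈ Φ u, ∃ b ∈ Φ v, (glue G1 G2).Adj a b := by
    intro u v hadj hbu
    have huH := (hH.adj_mem u v hadj).1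
    have hvH := (hH.adj_mem u v hadj).2
    have hui : u ∈ interior H := ⟨huH, hbu⟩
    have hpc : compPc H (compOf H u) ∈ pcs H :=
      mem_pcs_iff.2 (Or.inr (Or.inr (Or.inr ⟨compOf H u, compOf_isComp hui, rfl⟩)))
    have hvm : v ∈ (compPc H (compOf H u)).verts := by
      by_cases hbv : H.bnd v = none
      · exact Or.inl ((compOf_isComp hui).closed (mem_compOf hui) ⟨hvH, hbv⟩ hadj)
      · exact Or.inr ⟨hvH, hbv, u, mem_compOf hui, hH.adj_symm u v hadj⟩
    have hpadj : (compPc H (compOf H u)).Adj u v :=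
      ⟨hadj, Or.inl (mem_compOf hui), hvm, fun h => h.1 hbu⟩
    by_cases hpP : compPc H (compOf H u) ∈ P
    · exact hedge1 u v ⟨_, hpP, hpadj⟩
    · exact hedge2 u v ⟨_, ⟨hpc, hpP⟩, hpadj⟩
  constructor
  · -- sub
    intro v hv x hx
    rcases hx with ⟨u, hu, hv1, rfl⟩ | ⟨u, hu, hv2, rfl⟩
    · exact e1_mem_glue (M1.sub v hv1 hu)
    · exact e2_mem_glue (M2.sub v hv2 hu)
  · -- nonempty
    intro v hv
    rcases hcover v hv with hv1 | hv2
    · obtain ⟨a, ha⟩ := M1.nonempty v hv1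
      exact ⟨2 * a, hmem1 ha hv1⟩
    · obtain ⟨a, ha⟩ := M2.nonempty v hv2
      exact ⟨rmap G1 G2 a, hmem2 ha hv2⟩
  · -- conn
    intro v hv a ha b hb
    rcases ha with ⟨ua, hua, hv1, rfl⟩ | ⟨ua, hua, hv2, rfl⟩ <;>
      rcases hb with ⟨ub, hub, hv1', rfl⟩ | ⟨ub, hub, hv2', rfl⟩
    · exact lift1 v hv1 ua ub (M1.conn v hv1 ua hua ub hub)
    · -- mixed: a on side 1, b on side 2
      obtain ⟨i, hbv⟩ : ∃ i, H.bnd v = some i := by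
        cases hbv : H.bnd v with
        | none => exact absurd hbv (fun h => honeside v h hv1 hv2')
        | some i => exact ⟨i, rfl⟩
      obtain ⟨a1, ha1, hba1⟩ := (M1.bnd_some v hv1 i (by rw [hb1 v hv1, hbv])).2
      obtain ⟨a2, ha2, hba2⟩ := (M2.bnd_some v hv2' i (by rw [hb2 v hv2', hbv])).2
      have hkey : rmap G1 G2 a2 = 2 * a1 :=
        rmap_eq_two_mul h1 hba2 (M1.sub v hv1 ha1) hba1
      have r1 : ReachIn (glue G1 G2) (Φ v) (2 * ua) (2 * a1) :=
        lift1 v hv1 ua a1 (M1.conn v hv1 ua hua a1 ha1)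
      have r2 : ReachIn (glue G1 G2) (Φ v) (rmap G1 G2 ub) (rmap G1 G2 a2) :=
        lift2 v hv2' ub a2 (M2.conn v hv2' ub hub a2 ha2)
      rw [hkey] at r2
      exact Relation.ReflTransGen.trans r1 (ReachIn.symm' hglue_symm r2)
    · -- mixed: a on side 2, b on side 1
      obtain ⟨i, hbv⟩ : ∃ i, H.bnd v = some i := by
        cases hbv : H.bnd v with
        | none => exact absurd hbv (fun h => honeside v h hv1' hv2)
        | some i => exact ⟨i, rfl⟩
      obtain ⟨a1, ha1, hba1⟩ := (M1.bnd_some v hv1' i (by rw [hb1 v hv1', hbv])).2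
      obtain ⟨a2, ha2, hba2⟩ := (M2.bnd_some v hv2 i (by rw [hb2 v hv2, hbv])).2
      have hkey : rmap G1 G2 a2 = 2 * a1 :=
        rmap_eq_two_mul h1 hba2 (M1.sub v hv1' ha1) hba1
      have r1 : ReachIn (glue G1 G2) (Φ v) (2 * ub) (2 * a1) :=
        lift1 v hv1' ub a1 (M1.conn v hv1' ub hub a1 ha1)
      have r2 : ReachIn (glue G1 G2) (Φ v) (rmap G1 G2 ua) (rmap G1 G2 a2) :=
        lift2 v hv2 ua a2 (M2.conn v hv2 ua hua a2 ha2)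
      rw [hkey] at r2
      exact Relation.ReflTransGen.trans r2 (ReachIn.symm' hglue_symm r1)
    · exact lift2 v hv2 ua ub (M2.conn v hv2 ua hua ub hub)
  · -- disj
    intro u hu v hv huv
    rw [Set.disjoint_left]
    intro x hxu hxv
    rcases hxu with ⟨a, ha, hu1, rfl⟩ | ⟨a, ha, hu2, rfl⟩ <;>
      rcases hxv with ⟨b, hb, hv1, hab⟩ | ⟨b, hb, hv2, hab⟩
    · obtain rfl : a = b := by omega
      exact (Set.disjoint_left.1 (M1.disj u hu1 v hv1 huv)) ha hb
    · -- 2a = rmap b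
      obtain ⟨u', k, hbb, hbu', hu'G, heq⟩ :=
        rmap_even_shared (G1 := G1) (G2 := G2) (v := b) (by omega)
      obtain rfl : a = u' := by omega
      have h1' : H.bnd u = some k := hBndOf1 u hu1 a ha k hbu'
      have h2' : H.bnd v = some k := hBndOf2 v hv2 b hb k hbb
      exact huv (hH.bnd_inj u v k h1' h2')
    · -- rmap a = 2b
      obtain ⟨u', k, hba, hbu', hu'G, heq⟩ :=
        rmap_even_shared (G1 := G1) (G2 := G2) (v := a) (by omega)
      obtain rfl : b = u' := by omega
      have h1' : H.bnd v = some k := hBndOf1 v hv1 b hb k hbu'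
      have h2' : H.bnd u = some k := hBndOf2 u hu2 a ha k hba
      exact huv (hH.bnd_inj u v k h2' h1')
    · obtain rfl : a = b := rmap_inj h1 h2 hab
      exact (Set.disjoint_left.1 (M2.disj u hu2 v hv2 huv)) ha hb
  · -- edge
    intro u hu v hv hadj
    by_cases hbu : H.bnd u = none
    · exact hedgeInt u v hadj hbu
    by_cases hbv : H.bnd v = none
    · obtain ⟨a, ha, b, hb, hg⟩ := hedgeInt v u (hH.adj_symm u v hadj) hbv
      exact ⟨b, hb, a, ha, glue_adj_symm h1 h2 hg⟩
    obtain ⟨i, hbu'⟩ := Option.ne_none_iff_exists'.1 hbu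
    obtain ⟨j, hbv'⟩ := Option.ne_none_iff_exists'.1 hbv
    have hpc : edgePc u v i j ∈ pcs H :=
      mem_pcs_iff.2 (Or.inr (Or.inr (Or.inl ⟨u, v, i, j, hadj, hbu', hbv', rfl⟩)))
    have hpadj : (edgePc u v i j : BLG X).Adj u v := Or.inl ⟨rfl, rfl⟩
    by_cases hpP : edgePc u v i j ∈ P
    · exact hedge1 u v ⟨_, hpP, hpadj⟩
    · exact hedge2 u v ⟨_, ⟨hpc, hpP⟩, hpadj⟩
  · -- bnd_none
    intro v hv hbv x hx
    rcases hx with ⟨u, hu, hv1, rfl⟩ | ⟨u, hu, hv2, rfl⟩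
    · have := M1.bnd_none v hv1 (by rw [hb1 v hv1, hbv]) u hu
      rw [glue_bnd_e1 (M1.sub v hv1 hu), this]
    · have := M2.bnd_none v hv2 (by rw [hb2 v hv2, hbv]) u hu
      rw [glue_bnd_e2 (M2.sub v hv2 hu), this]
  · -- bnd_some
    intro v hv i hbv
    constructor
    · intro x hx
      rcases hx with ⟨u, hu, hv1, rfl⟩ | ⟨u, hu, hv2, rfl⟩
      · rcases (M1.bnd_some v hv1 i (by rw [hb1 v hv1, hbv])).1 u hu with h | h
        · exact Or.inl (by rw [glue_bnd_e1 (M1.sub v hv1 hu), h])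
        · exact Or.inr (by rw [glue_bnd_e1 (M1.sub v hv1 hu), h])
      · rcases (M2.bnd_some v hv2 i (by rw [hb2 v hv2, hbv])).1 u hu with h | h
        · exact Or.inl (by rw [glue_bnd_e2 (M2.sub v hv2 hu), h])
        · exact Or.inr (by rw [glue_bnd_e2 (M2.sub v hv2 hu), h])
    · rcases hcover v hv with hv1 | hv2
      · obtain ⟨a, ha, hba⟩ := (M1.bnd_some v hv1 i (by rw [hb1 v hv1, hbv])).2
        exact ⟨2 * a, hmem1 ha hv1, by rw [glue_bnd_e1 (M1.sub v hv1 ha), hba]⟩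
      · obtain ⟨a, ha, hba⟩ := (M2.bnd_some v hv2 i (by rw [hb2 v hv2, hbv])).2
        exact ⟨rmap G1 G2 a, hmem2 ha hv2, by rw [glue_bnd_e2 (M2.sub v hv2 ha), hba]⟩
  · -- labels
    intro v hv x hx
    have key : ∀ p ∈ pcs H, x ∈ p.label v →
        ∃ a ∈ Φ v, x ∈ (glue G1 G2).label a := by
      intro p hpc hxp
      have hvp : v ∈ p.verts := (pcs_label hH hpc hxp).2
      by_cases hpP : p ∈ P
      · have hv1 : v ∈ U1.verts := mem_unionOf_verts.2 ⟨p, hpP, hvp⟩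
        obtain ⟨a, ha, hxa⟩ :=
          M1.labels v hv1 x (mem_unionOf_label.2 ⟨p, hpP, hxp⟩)
        exact ⟨2 * a, hmem1 ha hv1, glue_label_e1 (M1.sub v hv1 ha) hxa⟩
      · have hv2 : v ∈ U2.verts := mem_unionOf_verts.2 ⟨p, ⟨hpc, hpP⟩, hvp⟩
        obtain ⟨a, ha, hxa⟩ :=
          M2.labels v hv2 x (mem_unionOf_label.2 ⟨p, ⟨hpc, hpP⟩, hxp⟩)
        exact ⟨rmap G1 G2 a, hmem2 ha hv2, glue_label_e2 (M2.sub v hv2 ha) hxa⟩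
    cases hbv : H.bnd v with
    | none =>
        have hvi : v ∈ interior H := ⟨hv, hbv⟩
        refine key (compPc H (compOf H v))
          (mem_pcs_iff.2 (Or.inr (Or.inr (Or.inr ⟨compOf H v, compOf_isComp hvi, rfl⟩)))) ?_
        show x ∈ (if v ∈ compOf H v then H.label v else ∅)
        rw [if_pos (mem_compOf hvi)]
        exact hx
    | some i =>
        refine key (singlePc v i {x})
          (mem_pcs_iff.2 (Or.inr (Or.inl ⟨v, hv, i, hbv, x, hx, rfl⟩))) ?_
        show x ∈ (if v = v then ({x} : Set X) else ∅)
        rw [if_pos rfl]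
        rfl

end BackwardAux

end Stmt9Aux

/-- For `t`-boundaried `X`-labeled graphs `H`, `G1`, `G2`: `H` is a
boundaried labeled minor of `G1 ⊕ G2` iff there is `P ⊆ pcs(H)` with `⊕_{p∈P} p` a
boundaried labeled minor of `G1` and `⊕_{p∈pcs(H)∖P} p` a boundaried labeled minor of `G2`. -/
theorem stmt9 {X : Type} (t : ℕ) (H G1 G2 : BLG X)
    (hH : H.WF t) (h1 : G1.WF t) (h2 : G2.WF t) :
    Minor H (glue G1 G2) ↔
      ∃ P ⊆ pcs H, Minor (unionOf P) G1 ∧ Minor (unionOf (pcs H \ P)) G2 := by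
  constructor
  · rintro ⟨φ, M⟩
    exact ⟨fwdP G1 G2 H φ, fwdP_subset,
      ⟨_, fwd_model1 h1 h2 hH M⟩, ⟨_, fwd_model2 h1 h2 hH M⟩⟩
  · rintro ⟨P, hP, ⟨ψ1, M1⟩, ⟨ψ2, M2⟩⟩
    exact ⟨_, bwd_model h1 h2 hH hP M1 M2⟩

end

end FDel
end
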